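/- arXiv:2405.10538 — 2 statements merged into one kernel-verified Lean document; each statement's English description precedes it below -/
import Mathlib

section
/- Let ℓ ≥ 2 and let r, j ≥ 1 be integers with r + j = ℓ. There exist a constant C > 0 and M₀ > 1, depending only on ℓ, such that for all real M ≥ M₀: ∑ 1/(a₁²⋯a_r²·b₁²⋯b_j²·c₁²⋯c_r²) ≤ C·(log M)^{2(j−1)}/M, where the sum ranges over all tuples (a₁,…,a_r, b₁,…,b_j, c₁,…,c_r) of positive integers satisfying a₁⋯a_r·b₁⋯b_j ≥ M and b₁⋯b_j·c₁⋯c_r ≥ M. -/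
open MeasureTheory Filter Set
open scoped ENNReal

namespace OverlapAux

/-- weight of one coordinate -/
noncomputable def v (n : ℕ+) : ℝ≥0∞ := ENNReal.ofReal (1 / ((n : ℕ) : ℝ) ^ 2)

noncomputable def w {k : ℕ} (b : Fin k → ℕ+) : ℝ≥0∞ := ∏ i, v (b i)

noncomputable def P {k : ℕ} (b : Fin k → ℕ+) : ℝ := ∏ i, ((b i : ℕ) : ℝ)

lemma one_le_P {k : ℕ} (b : Fin k → ℕ+) : 1 ≤ P b := by
  unfold P
  calc (1:ℝ) = ∏ _i : Fin k, 1 := by simp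
    _ ≤ ∏ i, ((b i : ℕ) : ℝ) := by
        refine Finset.prod_le_prod (fun i _ => zero_le_one) fun i _ => ?_
        have := (b i).one_le
        exact_mod_cast this

lemma P_pos {k : ℕ} (b : Fin k → ℕ+) : 0 < P b := zero_lt_one.trans_le (one_le_P b)

lemma tsum_le_of_forall_sum_le {ι : Type*} {f : ι → ℝ≥0∞} {c : ℝ≥0∞}
    (h : ∀ s : Finset ι, ∑ n ∈ s, f n ≤ c) : ∑' n, f n ≤ c := by
  rw [ENNReal.tsum_eq_iSup_sum]; exact iSup_le h

lemma sum_inv_le_log {T : ℝ} (hT : 1 ≤ T) (t : Finset ℕ)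
    (ht : ∀ n ∈ t, 1 ≤ n ∧ (n : ℝ) ≤ T) :
    ∑ n ∈ t, (1 / (n : ℝ)) ≤ 1 + Real.log T := by
  have hsub : t ⊆ Finset.Icc 1 ⌊T⌋₊ := by
    intro n hn
    obtain ⟨h1, h2⟩ := ht n hn
    exact Finset.mem_Icc.mpr ⟨h1, Nat.le_floor h2⟩
  have h1 : ∑ n ∈ t, (1 / (n : ℝ)) ≤ ∑ n ∈ Finset.Icc 1 ⌊T⌋₊, (1 / (n : ℝ)) :=
    Finset.sum_le_sum_of_subset_of_nonneg hsub (by intro i _ _; positivity)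
  have h2 : ∑ n ∈ Finset.Icc 1 ⌊T⌋₊, (1 / (n : ℝ)) = ((harmonic ⌊T⌋₊ : ℚ) : ℝ) := by
    rw [harmonic_eq_sum_Icc]
    push_cast
    simp [one_div]
  have h3 : ((harmonic ⌊T⌋₊ : ℚ) : ℝ) ≤ 1 + Real.log ⌊T⌋₊ := harmonic_le_one_add_log _
  have h4 : Real.log ⌊T⌋₊ ≤ Real.log T := by
    have h5 : (⌊T⌋₊ : ℝ) ≤ T := Nat.floor_le (by linarith)
    rcases eq_or_lt_of_le (Nat.cast_nonneg (α := ℝ) ⌊T⌋₊) with h | h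
    · rw [← h, Real.log_zero]; exact Real.log_nonneg hT
    · exact Real.log_le_log h h5
  linarith

lemma sum_inv_sqrt_aux (N : ℕ) :
    ∑ n ∈ Finset.Icc 1 N, (1 / Real.sqrt (n : ℝ)) ≤ 2 * Real.sqrt N := by
  induction N with
  | zero => simp
  | succ N ih =>
    rw [Finset.sum_Icc_succ_top (by omega)]
    have ha : Real.sqrt N ^ 2 = N := Real.sq_sqrt (by positivity)
    have hb : Real.sqrt (N + 1 : ℕ) ^ 2 = (N : ℝ) + 1 := by
      rw [Real.sq_sqrt (by positivity)]; push_cast; ring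
    have hb0 : 0 < Real.sqrt ((N + 1 : ℕ) : ℝ) := Real.sqrt_pos.mpr (by positivity)
    have ha0 : 0 ≤ Real.sqrt N := Real.sqrt_nonneg _
    have key : 1 / Real.sqrt ((N + 1 : ℕ) : ℝ) ≤
        2 * Real.sqrt ((N + 1 : ℕ) : ℝ) - 2 * Real.sqrt N := by
      rw [div_le_iff₀ hb0]
      nlinarith [sq_nonneg (Real.sqrt ((N+1 : ℕ) : ℝ) - Real.sqrt N)]
    calc ∑ n ∈ Finset.Icc 1 N, (1 / Real.sqrt (n : ℝ)) + 1 / Real.sqrt ((N+1 : ℕ) : ℝ)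
        ≤ 2 * Real.sqrt N + (2 * Real.sqrt ((N + 1 : ℕ) : ℝ) - 2 * Real.sqrt N) :=
          add_le_add ih key
      _ = 2 * Real.sqrt ((N + 1 : ℕ) : ℝ) := by ring

lemma sum_inv_sqrt_le {T : ℝ} (hT : 1 ≤ T) (t : Finset ℕ)
    (ht : ∀ n ∈ t, 1 ≤ n ∧ (n : ℝ) ≤ T) :
    ∑ n ∈ t, (1 / Real.sqrt (n : ℝ)) ≤ 2 * Real.sqrt T := by
  have hsub : t ⊆ Finset.Icc 1 ⌊T⌋₊ := by
    intro n hn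
    obtain ⟨h1, h2⟩ := ht n hn
    exact Finset.mem_Icc.mpr ⟨h1, Nat.le_floor h2⟩
  have h1 : ∑ n ∈ t, (1 / Real.sqrt (n:ℝ)) ≤ ∑ n ∈ Finset.Icc 1 ⌊T⌋₊, (1 / Real.sqrt (n:ℝ)) :=
    Finset.sum_le_sum_of_subset_of_nonneg hsub (by intro i _ _; positivity)
  refine h1.trans ((sum_inv_sqrt_aux _).trans ?_)
  have : Real.sqrt ⌊T⌋₊ ≤ Real.sqrt T := Real.sqrt_le_sqrt (Nat.floor_le (by linarith))
  linarith

lemma sum_inv_sq_tail_le {T : ℝ} (hT : 1 ≤ T) (t : Finset ℕ)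
    (ht : ∀ n ∈ t, 1 ≤ n ∧ T ≤ (n : ℝ)) :
    ∑ n ∈ t, (1 / (n : ℝ) ^ 2) ≤ 2 / T := by
  set K := ⌈T⌉₊ with hK
  have hT0 : 0 < T := by linarith
  have hK1 : 1 ≤ K := Nat.one_le_ceil_iff.mpr hT0
  have hTK : T ≤ (K : ℝ) := Nat.le_ceil T
  set m := t.sup id with hm
  have hsub : t ⊆ Finset.Icc K m := by
    intro n hn
    obtain ⟨h1, h2⟩ := ht n hn
    exact Finset.mem_Icc.mpr ⟨Nat.ceil_le.mpr h2, Finset.le_sup (f := id) hn⟩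
  have h1 : ∑ n ∈ t, (1 / (n:ℝ)^2) ≤ ∑ n ∈ Finset.Icc K m, (1 / (n:ℝ)^2) :=
    Finset.sum_le_sum_of_subset_of_nonneg hsub (by intro i _ _; positivity)
  have h2 : ∑ n ∈ Finset.Icc K m, (1 / (n:ℝ)^2) ≤ 2 / (K : ℝ) := by
    rcases le_or_gt K m with h | h
    · rw [Finset.Icc_eq_cons_Ioc h, Finset.sum_cons]
      have h3 : ∑ n ∈ Finset.Ioc K m, (1 / (n:ℝ)^2) ≤ (K:ℝ)⁻¹ - (m:ℝ)⁻¹ := by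
        simpa [one_div] using sum_Ioc_inv_sq_le_sub (α := ℝ) (by omega) h
      have hKr : (1:ℝ) ≤ (K:ℝ) := by exact_mod_cast hK1
      have h4 : 1 / (K:ℝ)^2 ≤ 1 / (K:ℝ) := by
        apply one_div_le_one_div_of_le (by linarith)
        nlinarith
      have h5 : (0:ℝ) ≤ (m:ℝ)⁻¹ := by positivity
      have h6 : (1:ℝ)/(K:ℝ) = (K:ℝ)⁻¹ := one_div _
      have h7 : (2:ℝ)/(K:ℝ) = 1/(K:ℝ) + 1/(K:ℝ) := by ring
      linarith
    · rw [Finset.Icc_eq_empty (by omega), Finset.sum_empty]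
      positivity
  refine h1.trans (h2.trans ?_)
  apply div_le_div_of_nonneg_left (by norm_num) hT0 hTK

end OverlapAux
section part2
namespace OverlapAux

lemma tsum_cond_le (g : ℕ+ → ℝ) (p : ℕ+ → Prop) [DecidablePred p] (c : ℝ)
    (hg : ∀ n, 0 ≤ g n)
    (h : ∀ t : Finset ℕ+, (∀ n ∈ t, p n) → ∑ n ∈ t, g n ≤ c) :
    ∑' n : ℕ+, (if p n then ENNReal.ofReal (g n) else 0) ≤ ENNReal.ofReal c := by
  apply tsum_le_of_forall_sum_le
  intro s
  have h1 : ∑ n ∈ s, (if p n then ENNReal.ofReal (g n) else 0)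
      = ∑ n ∈ s.filter p, ENNReal.ofReal (g n) := (Finset.sum_filter _ _).symm
  rw [h1, ← ENNReal.ofReal_sum_of_nonneg (fun n _ => hg n)]
  exact ENNReal.ofReal_le_ofReal (h _ (fun n hn => (Finset.mem_filter.mp hn).2))

lemma pnat_finset_sum (t : Finset ℕ+) (g : ℕ → ℝ) :
    ∑ n ∈ t, g (n : ℕ) = ∑ m ∈ t.image (fun n : ℕ+ => (n : ℕ)), g m := by
  rw [Finset.sum_image]
  intro a _ b _ hab
  exact PNat.coe_injective hab

lemma harm_tsum {T : ℝ} (hT : 1 ≤ T) :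
    (∑' n : ℕ+, if ((n : ℕ) : ℝ) ≤ T then ENNReal.ofReal (1 / ((n:ℕ):ℝ)) else 0)
      ≤ ENNReal.ofReal (1 + Real.log T) := by
  refine tsum_cond_le _ _ _ (fun n => by positivity) ?_
  intro t ht
  rw [pnat_finset_sum t (fun m => 1 / (m : ℝ))]
  refine sum_inv_le_log hT _ ?_
  intro n hn
  obtain ⟨a, ha, rfl⟩ := Finset.mem_image.mp hn
  exact ⟨a.one_le, ht a ha⟩

lemma sqrt_tsum {T : ℝ} (hT : 1 ≤ T) :
    (∑' n : ℕ+, if ((n : ℕ) : ℝ) ≤ T then ENNReal.ofReal (1 / Real.sqrt ((n:ℕ):ℝ)) else 0)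
      ≤ ENNReal.ofReal (2 * Real.sqrt T) := by
  refine tsum_cond_le _ _ _ (fun n => by positivity) ?_
  intro t ht
  rw [pnat_finset_sum t (fun m => 1 / Real.sqrt (m : ℝ))]
  refine sum_inv_sqrt_le hT _ ?_
  intro n hn
  obtain ⟨a, ha, rfl⟩ := Finset.mem_image.mp hn
  exact ⟨a.one_le, ht a ha⟩

lemma tail_tsum {T : ℝ} (hT : 1 ≤ T) :
    (∑' n : ℕ+, if T ≤ ((n : ℕ) : ℝ) then v n else 0) ≤ ENNReal.ofReal (2 / T) := by
  refine tsum_cond_le (fun n => 1 / ((n:ℕ):ℝ)^2) _ _ (fun n => by positivity) ?_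
  intro t ht
  rw [pnat_finset_sum t (fun m => 1 / (m : ℝ)^2)]
  refine sum_inv_sq_tail_le hT _ ?_
  intro n hn
  obtain ⟨a, ha, rfl⟩ := Finset.mem_image.mp hn
  exact ⟨a.one_le, ht a ha⟩

lemma v_mass : (∑' n : ℕ+, v n) ≤ 2 := by
  have h := tail_tsum le_rfl
  have h2 : ∀ n : ℕ+, (if (1:ℝ) ≤ ((n : ℕ) : ℝ) then v n else 0) = v n := by
    intro n
    rw [if_pos]
    exact_mod_cast n.one_le
  rw [tsum_congr h2] at h
  refine h.trans ?_
  norm_num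

lemma tsum_pi_succ {k : ℕ} (f : (Fin (k+1) → ℕ+) → ℝ≥0∞) :
    ∑' b, f b = ∑' (x : ℕ+) (b' : Fin k → ℕ+), f (Fin.cons x b') := by
  rw [← (Fin.consEquiv (fun _ : Fin (k+1) => ℕ+)).tsum_eq f, ENNReal.tsum_prod']
  rfl

lemma w_cons {k : ℕ} (x : ℕ+) (b' : Fin k → ℕ+) : w (Fin.cons x b') = v x * w b' := by
  simp [w, Fin.prod_univ_succ]

lemma P_cons {k : ℕ} (x : ℕ+) (b' : Fin k → ℕ+) : P (Fin.cons x b') = ((x:ℕ):ℝ) * P b' := by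
  simp [P, Fin.prod_univ_succ]

lemma w_mass (k : ℕ) : (∑' b : Fin k → ℕ+, w b) ≤ 2 ^ k := by
  induction k with
  | zero =>
    rw [tsum_eq_single (default : Fin 0 → ℕ+) (fun b hb => absurd (Subsingleton.elim b default) hb)]
    simp [w]
  | succ k ih =>
    rw [tsum_pi_succ (fun b => w b)]
    calc ∑' (x : ℕ+) (b' : Fin k → ℕ+), w (Fin.cons x b')
        = ∑' (x : ℕ+), v x * ∑' (b' : Fin k → ℕ+), w b' := by
          refine tsum_congr fun x => ?_
          rw [← ENNReal.tsum_mul_left]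
          exact tsum_congr fun b' => w_cons x b'
      _ = (∑' (x : ℕ+), v x) * ∑' (b' : Fin k → ℕ+), w b' := ENNReal.tsum_mul_right
      _ ≤ 2 * 2 ^ k := mul_le_mul' v_mass ih
      _ = 2 ^ (k+1) := by ring

end OverlapAux
end part2
section part3
namespace OverlapAux

lemma polylog_le_sqrt (s : ℕ) : ∃ Cs : ℝ, 1 ≤ Cs ∧ ∀ y : ℝ, 1 ≤ y →
    (1 + Real.log y) ^ s ≤ Cs * Real.sqrt y := by
  rcases Nat.eq_zero_or_pos s with hs | hs
  · exact ⟨1, le_rfl, fun y hy => by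
      simpa [hs] using Real.one_le_sqrt.mpr hy⟩
  refine ⟨(1 + 2 * s) ^ s, one_le_pow₀ (by
    have : (0:ℝ) ≤ (s:ℝ) := Nat.cast_nonneg s
    linarith), fun y hy => ?_⟩
  have hy0 : (0:ℝ) < y := by linarith
  have hε : (0:ℝ) < 1 / (2 * s) := by positivity
  have h1 : Real.log y ≤ y ^ ((1:ℝ) / (2 * s)) / (1 / (2 * s)) :=
    Real.log_le_rpow_div hy0.le hε
  have h2 : y ^ ((1:ℝ) / (2 * s)) / (1 / (2 * s)) = 2 * s * y ^ ((1:ℝ) / (2 * s)) := by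
    field_simp
  have h3 : (1:ℝ) ≤ y ^ ((1:ℝ) / (2 * s)) := Real.one_le_rpow hy hε.le
  have h4 : 1 + Real.log y ≤ (1 + 2 * s) * y ^ ((1:ℝ) / (2 * s)) := by
    rw [add_mul, one_mul]
    have : (1:ℝ) ≤ y ^ ((1:ℝ) / (2*s)) := h3
    nlinarith [h1, h2.symm ▸ h1]
  have h5 : (1 + Real.log y) ^ s ≤ ((1 + 2 * s) * y ^ ((1:ℝ) / (2 * s))) ^ s := by
    apply pow_le_pow_left₀ _ h4
    have := Real.log_nonneg hy
    linarith
  refine h5.trans ?_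
  rw [mul_pow]
  have h6 : (y ^ ((1:ℝ) / (2 * s))) ^ s = Real.sqrt y := by
    rw [← Real.rpow_natCast (y ^ ((1:ℝ) / (2 * s))) s, ← Real.rpow_mul hy0.le]
    rw [Real.sqrt_eq_rpow]
    congr 1
    field_simp
  rw [h6]

noncomputable def g (s : ℕ) (T B : ℝ) : ℝ :=
  (min 1 (B / T)) ^ 2 * (1 + Real.log (max (T / B) 1)) ^ s

lemma g_nonneg {s : ℕ} {T B : ℝ} (hT : 0 < T) (hB : 0 < B) : 0 ≤ g s T B := by
  unfold g
  have h1 : 0 ≤ min 1 (B / T) := le_min zero_le_one (by positivity)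
  have h2 : (0:ℝ) ≤ 1 + Real.log (max (T / B) 1) := by
    have := Real.log_nonneg (le_max_right (T / B) 1)
    linarith
  positivity

lemma g_le_one {s : ℕ} {T B : ℝ} (hT : 0 < T) (hB : 0 < B) (h : T ≤ B) : g s T B ≤ 1 := by
  unfold g
  have h1 : max (T / B) 1 = 1 := max_eq_right ((div_le_one hB).mpr h)
  rw [h1]
  have h2 : 0 ≤ min 1 (B / T) := le_min zero_le_one (by positivity)
  have h3 : min 1 (B / T) ≤ 1 := min_le_left _ _
  calc (min 1 (B/T))^2 * (1 + Real.log 1)^s = (min 1 (B/T))^2 := by simp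
    _ ≤ 1 := by nlinarith

lemma g_eq_one {s : ℕ} {T B : ℝ} (hT : 0 < T) (hB : 0 < B) (h : T ≤ B) : g s T B = 1 := by
  unfold g
  rw [max_eq_right ((div_le_one hB).mpr h), Real.log_one,
    min_eq_left ((one_le_div hT).mpr h)]
  simp

lemma g_shift {s : ℕ} (T B : ℝ) (x : ℝ) (hx : 0 < x) : g s T (x * B) = g s (T / x) B := by
  unfold g
  rw [div_div, show B / (T / x) = x * B / T by rw [div_div_eq_mul_div]; ring_nf]

noncomputable def Phi (j s : ℕ) (T : ℝ) : ℝ≥0∞ :=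
  ∑' b : Fin j → ℕ+, w b * ENNReal.ofReal (g s T (P b))

end OverlapAux
end part3
section part4
namespace OverlapAux

lemma div_le_div_of_nonneg_left' {a b c : ℝ} (h : a ≤ b) (hc : 0 < c) : a / c ≤ b / c := by
  gcongr

lemma xcast_pos (x : ℕ+) : (0:ℝ) < ((x:ℕ):ℝ) := by exact_mod_cast x.pos

lemma xcast_one_le (x : ℕ+) : (1:ℝ) ≤ ((x:ℕ):ℝ) := by exact_mod_cast x.one_le

lemma phi_bound (s : ℕ) : ∀ j : ℕ, 1 ≤ j → ∃ C : ℝ, 1 ≤ C ∧ ∀ T : ℝ, 1 ≤ T →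
    Phi j s T ≤ ENNReal.ofReal (C * (1 + Real.log T) ^ (j - 1) / T) := by
  intro j hj
  induction j, hj using Nat.le_induction with
  | base =>
    obtain ⟨Cs, hCs1, hCs⟩ := polylog_le_sqrt s
    refine ⟨2 + 2 * Cs, by linarith, fun T hT => ?_⟩
    have hT0 : (0:ℝ) < T := by linarith
    have hre : Phi 1 s T = ∑' x : ℕ+, v x * ENNReal.ofReal (g s T ((x:ℕ):ℝ)) := by
      unfold Phi
      rw [← ((Equiv.funUnique (Fin 1) ℕ+).symm.tsum_eq
        (fun b => w b * ENNReal.ofReal (g s T (P b))))]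
      refine tsum_congr fun x => ?_
      simp [w, P]
    rw [hre]
    set A : ℝ := Cs * Real.sqrt T / T ^ 2 with hA
    have hA0 : 0 ≤ A := by positivity
    have key : ∀ x : ℕ+, v x * ENNReal.ofReal (g s T ((x:ℕ):ℝ)) ≤
        (if T ≤ ((x:ℕ):ℝ) then v x else 0)
        + (if ((x:ℕ):ℝ) ≤ T then
            ENNReal.ofReal A * ENNReal.ofReal (1 / Real.sqrt ((x:ℕ):ℝ)) else 0) := by
      intro x
      have hx0 := xcast_pos x
      by_cases hx : T ≤ ((x:ℕ):ℝ)
      · rw [if_pos hx]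
        have h1 : ENNReal.ofReal (g s T ((x:ℕ):ℝ)) ≤ 1 := by
          rw [show (1:ℝ≥0∞) = ENNReal.ofReal 1 by simp]
          exact ENNReal.ofReal_le_ofReal (g_le_one hT0 hx0 hx)
        calc v x * ENNReal.ofReal (g s T ((x:ℕ):ℝ)) ≤ v x * 1 := mul_le_mul' le_rfl h1
          _ = v x := mul_one _
          _ ≤ _ := le_add_right le_rfl
      · rw [if_neg hx]
        have hxT : ((x:ℕ):ℝ) < T := lt_of_not_ge hx
        rw [if_pos hxT.le, zero_add]
        have hreal : 1 / ((x:ℕ):ℝ)^2 * g s T ((x:ℕ):ℝ) ≤ A * (1 / Real.sqrt ((x:ℕ):ℝ)) := by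
          have e1 : min 1 (((x:ℕ):ℝ)/T) = ((x:ℕ):ℝ)/T :=
            min_eq_right ((div_le_one hT0).mpr hxT.le)
          have e3 : (1:ℝ) ≤ T/((x:ℕ):ℝ) := (one_le_div hx0).mpr hxT.le
          have e2 : max (T/((x:ℕ):ℝ)) 1 = T/((x:ℕ):ℝ) := max_eq_left e3
          have e4 : (1 + Real.log (T/((x:ℕ):ℝ)))^s ≤ Cs * Real.sqrt (T/((x:ℕ):ℝ)) := hCs _ e3
          have e5 : Real.sqrt (T/((x:ℕ):ℝ)) = Real.sqrt T / Real.sqrt ((x:ℕ):ℝ) :=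
            Real.sqrt_div hT0.le _
          have hg : g s T ((x:ℕ):ℝ) ≤ (((x:ℕ):ℝ)/T)^2 * (Cs * (Real.sqrt T / Real.sqrt ((x:ℕ):ℝ))) := by
            unfold g
            rw [e1, e2, ← e5]
            exact mul_le_mul_of_nonneg_left e4 (by positivity)
          calc 1 / ((x:ℕ):ℝ)^2 * g s T ((x:ℕ):ℝ)
              ≤ 1 / ((x:ℕ):ℝ)^2 * ((((x:ℕ):ℝ)/T)^2 * (Cs * (Real.sqrt T / Real.sqrt ((x:ℕ):ℝ)))) := by
                exact mul_le_mul_of_nonneg_left hg (by positivity)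
            _ = A * (1 / Real.sqrt ((x:ℕ):ℝ)) := by
                rw [hA]
                have hsx : Real.sqrt ((x:ℕ):ℝ) ≠ 0 := by positivity
                field_simp
        calc v x * ENNReal.ofReal (g s T ((x:ℕ):ℝ))
            = ENNReal.ofReal (1 / ((x:ℕ):ℝ)^2 * g s T ((x:ℕ):ℝ)) := by
              rw [v, ← ENNReal.ofReal_mul (by positivity)]
          _ ≤ ENNReal.ofReal (A * (1 / Real.sqrt ((x:ℕ):ℝ))) := ENNReal.ofReal_le_ofReal hreal
          _ = ENNReal.ofReal A * ENNReal.ofReal (1 / Real.sqrt ((x:ℕ):ℝ)) :=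
              ENNReal.ofReal_mul hA0
    calc ∑' x : ℕ+, v x * ENNReal.ofReal (g s T ((x:ℕ):ℝ))
        ≤ ∑' x : ℕ+, ((if T ≤ ((x:ℕ):ℝ) then v x else 0)
          + (if ((x:ℕ):ℝ) ≤ T then
              ENNReal.ofReal A * ENNReal.ofReal (1 / Real.sqrt ((x:ℕ):ℝ)) else 0)) :=
          ENNReal.tsum_le_tsum key
      _ = (∑' x : ℕ+, if T ≤ ((x:ℕ):ℝ) then v x else 0)
          + ∑' x : ℕ+, (if ((x:ℕ):ℝ) ≤ T then
              ENNReal.ofReal A * ENNReal.ofReal (1 / Real.sqrt ((x:ℕ):ℝ)) else 0) :=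
          ENNReal.tsum_add
      _ ≤ ENNReal.ofReal (2 / T) + ENNReal.ofReal A * ENNReal.ofReal (2 * Real.sqrt T) := by
          refine add_le_add (tail_tsum hT) ?_
          have hrw : ∀ x : ℕ+, (if ((x:ℕ):ℝ) ≤ T then
              ENNReal.ofReal A * ENNReal.ofReal (1 / Real.sqrt ((x:ℕ):ℝ)) else 0)
              = ENNReal.ofReal A * (if ((x:ℕ):ℝ) ≤ T then
                ENNReal.ofReal (1 / Real.sqrt ((x:ℕ):ℝ)) else 0) := by
            intro x; split_ifs <;> simp
          rw [tsum_congr hrw, ENNReal.tsum_mul_left]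
          exact mul_le_mul' le_rfl (sqrt_tsum hT)
      _ ≤ ENNReal.ofReal ((2 + 2 * Cs) * (1 + Real.log T) ^ (1 - 1) / T) := by
          rw [← ENNReal.ofReal_mul hA0, ← ENNReal.ofReal_add (by positivity) (by positivity)]
          apply ENNReal.ofReal_le_ofReal
          have hs1 : A * (2 * Real.sqrt T) = 2 * Cs / T := by
            rw [hA]
            rw [div_mul_eq_mul_div, div_eq_div_iff (by positivity) (by positivity)]
            have hss : Real.sqrt T * Real.sqrt T = T := Real.mul_self_sqrt hT0.le
            linear_combination (2 * Cs * T) * hss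
          rw [hs1]
          simp only [Nat.sub_self, pow_zero, mul_one]
          rw [← add_div]
  | succ j hj ih =>
    obtain ⟨C, hC1, hC⟩ := ih
    have h2j : (0:ℝ) < 2 ^ (j+1) := by positivity
    refine ⟨C + 2 ^ (j+1), by linarith, fun T hT => ?_⟩
    have hT0 : (0:ℝ) < T := by linarith
    have hlogT : (0:ℝ) ≤ Real.log T := Real.log_nonneg hT
    have expand : Phi (j+1) s T = ∑' (x : ℕ+), v x * Phi j s (T / ((x:ℕ):ℝ)) := by
      unfold Phi
      rw [tsum_pi_succ (fun b => w b * ENNReal.ofReal (g s T (P b)))]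
      refine tsum_congr fun x => ?_
      rw [← ENNReal.tsum_mul_left]
      refine tsum_congr fun b' => ?_
      rw [w_cons, P_cons, g_shift _ _ _ (xcast_pos x), mul_assoc]
    rw [expand]
    set K : ℝ := C * (1 + Real.log T) ^ (j - 1) / T with hKdef
    have hK0 : 0 ≤ K := by positivity
    have key : ∀ x : ℕ+, v x * Phi j s (T / ((x:ℕ):ℝ)) ≤
        (if ((x:ℕ):ℝ) ≤ T then ENNReal.ofReal K * ENNReal.ofReal (1 / ((x:ℕ):ℝ)) else 0)
        + (if T ≤ ((x:ℕ):ℝ) then (2:ℝ≥0∞) ^ j * v x else 0) := by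
      intro x
      have hx0 := xcast_pos x
      have hx1 := xcast_one_le x
      by_cases hx : ((x:ℕ):ℝ) ≤ T
      · rw [if_pos hx]
        have hTx1 : (1:ℝ) ≤ T / ((x:ℕ):ℝ) := (one_le_div hx0).mpr hx
        have h1 : Phi j s (T / ((x:ℕ):ℝ)) ≤
            ENNReal.ofReal (C * (1 + Real.log (T / ((x:ℕ):ℝ))) ^ (j-1) / (T / ((x:ℕ):ℝ))) :=
          hC _ hTx1
        have h2 : C * (1 + Real.log (T / ((x:ℕ):ℝ))) ^ (j-1) / (T / ((x:ℕ):ℝ))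
            ≤ K * ((x:ℕ):ℝ) := by
          rw [div_div_eq_mul_div, hKdef]
          have hlogle : Real.log (T / ((x:ℕ):ℝ)) ≤ Real.log T :=
            Real.log_le_log (by positivity) (div_le_self hT0.le hx1)
          have hlogpos : (0:ℝ) ≤ Real.log (T / ((x:ℕ):ℝ)) :=
            Real.log_nonneg hTx1
          have hpow : (1 + Real.log (T / ((x:ℕ):ℝ))) ^ (j-1) ≤ (1 + Real.log T) ^ (j-1) :=
            pow_le_pow_left₀ (by linarith) (by linarith) _
          calc C * (1 + Real.log (T / ((x:ℕ):ℝ))) ^ (j-1) * ((x:ℕ):ℝ) / T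
              ≤ C * (1 + Real.log T) ^ (j-1) * ((x:ℕ):ℝ) / T := by
                have hnum : C * (1 + Real.log (T / ((x:ℕ):ℝ))) ^ (j-1) * ((x:ℕ):ℝ)
                    ≤ C * (1 + Real.log T) ^ (j-1) * ((x:ℕ):ℝ) :=
                  mul_le_mul_of_nonneg_right
                    (mul_le_mul_of_nonneg_left hpow (by linarith)) hx0.le
                exact div_le_div_of_nonneg_left' hnum hT0
            _ = C * (1 + Real.log T) ^ (j - 1) / T * ((x:ℕ):ℝ) := by ring
        refine le_trans ?_ le_self_add
        calc v x * Phi j s (T / ((x:ℕ):ℝ))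
            ≤ ENNReal.ofReal (1 / ((x:ℕ):ℝ)^2) * ENNReal.ofReal (K * ((x:ℕ):ℝ)) := by
              exact mul_le_mul' le_rfl (h1.trans (ENNReal.ofReal_le_ofReal h2))
          _ = ENNReal.ofReal (1 / ((x:ℕ):ℝ)^2 * (K * ((x:ℕ):ℝ))) :=
              (ENNReal.ofReal_mul (by positivity)).symm
          _ = ENNReal.ofReal (K * (1 / ((x:ℕ):ℝ))) := by
              congr 1
              field_simp
          _ = ENNReal.ofReal K * ENNReal.ofReal (1 / ((x:ℕ):ℝ)) := ENNReal.ofReal_mul hK0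
      · rw [if_neg hx, if_pos (lt_of_not_ge hx).le]
        have hTx : T / ((x:ℕ):ℝ) < 1 := (div_lt_one hx0).mpr (lt_of_not_ge hx)
        have hTx0 : (0:ℝ) < T / ((x:ℕ):ℝ) := by positivity
        have hinner : Phi j s (T / ((x:ℕ):ℝ)) ≤ 2 ^ j := by
          refine le_trans (ENNReal.tsum_le_tsum fun b' => ?_) (w_mass j)
          have h1 : ENNReal.ofReal (g s (T / ((x:ℕ):ℝ)) (P b')) ≤ 1 := by
            rw [show (1:ℝ≥0∞) = ENNReal.ofReal 1 by simp]
            exact ENNReal.ofReal_le_ofReal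
              (g_le_one hTx0 (P_pos b') (hTx.le.trans (one_le_P b')))
          calc w b' * ENNReal.ofReal (g s (T / ((x:ℕ):ℝ)) (P b'))
              ≤ w b' * 1 := mul_le_mul' le_rfl h1
            _ = w b' := mul_one _
        rw [zero_add]
        calc v x * Phi j s (T / ((x:ℕ):ℝ)) ≤ v x * 2 ^ j := mul_le_mul' le_rfl hinner
          _ = 2 ^ j * v x := mul_comm _ _
    have h2jc : ((2:ℝ≥0∞))^j = ENNReal.ofReal ((2:ℝ)^j) := by
      rw [ENNReal.ofReal_pow zero_le_two]
      norm_num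
    calc ∑' x : ℕ+, v x * Phi j s (T / ((x:ℕ):ℝ))
        ≤ ∑' x : ℕ+, ((if ((x:ℕ):ℝ) ≤ T then
            ENNReal.ofReal K * ENNReal.ofReal (1 / ((x:ℕ):ℝ)) else 0)
          + (if T ≤ ((x:ℕ):ℝ) then (2:ℝ≥0∞) ^ j * v x else 0)) := ENNReal.tsum_le_tsum key
      _ = (∑' x : ℕ+, if ((x:ℕ):ℝ) ≤ T then
            ENNReal.ofReal K * ENNReal.ofReal (1 / ((x:ℕ):ℝ)) else 0)
          + ∑' x : ℕ+, (if T ≤ ((x:ℕ):ℝ) then (2:ℝ≥0∞) ^ j * v x else 0) := ENNReal.tsum_add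
      _ ≤ ENNReal.ofReal K * ENNReal.ofReal (1 + Real.log T)
          + (2:ℝ≥0∞) ^ j * ENNReal.ofReal (2 / T) := by
          refine add_le_add ?_ ?_
          · have hrw : ∀ x : ℕ+, (if ((x:ℕ):ℝ) ≤ T then
                ENNReal.ofReal K * ENNReal.ofReal (1 / ((x:ℕ):ℝ)) else 0)
                = ENNReal.ofReal K * (if ((x:ℕ):ℝ) ≤ T then
                  ENNReal.ofReal (1 / ((x:ℕ):ℝ)) else 0) := by
              intro x; split_ifs <;> simp
            rw [tsum_congr hrw, ENNReal.tsum_mul_left]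
            exact mul_le_mul' le_rfl (harm_tsum hT)
          · have hrw : ∀ x : ℕ+, (if T ≤ ((x:ℕ):ℝ) then (2:ℝ≥0∞) ^ j * v x else 0)
                = (2:ℝ≥0∞) ^ j * (if T ≤ ((x:ℕ):ℝ) then v x else 0) := by
              intro x; split_ifs <;> simp
            rw [tsum_congr hrw, ENNReal.tsum_mul_left]
            exact mul_le_mul' le_rfl (tail_tsum hT)
      _ ≤ ENNReal.ofReal ((C + 2 ^ (j+1)) * (1 + Real.log T) ^ (j + 1 - 1) / T) := by
          rw [h2jc, ← ENNReal.ofReal_mul hK0, ← ENNReal.ofReal_mul (by positivity),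
            ← ENNReal.ofReal_add (by positivity) (by positivity)]
          apply ENNReal.ofReal_le_ofReal
          have e1 : K * (1 + Real.log T) = C * (1 + Real.log T) ^ j / T := by
            rw [hKdef, div_mul_eq_mul_div, mul_assoc, ← pow_succ,
              Nat.sub_add_cancel hj]
          have e2 : (2:ℝ)^j * (2 / T) = 2 ^ (j+1) / T := by
            rw [pow_succ]; ring
          rw [e1, e2, ← add_div, Nat.add_sub_cancel]
          have hL1 : (1:ℝ) ≤ 1 + Real.log T := by linarith
          have hLj : (1:ℝ) ≤ (1 + Real.log T) ^ j := one_le_pow₀ hL1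
          apply div_le_div_of_nonneg_left' ?_ hT0
          nlinarith
end OverlapAux
end part4
section part5
namespace OverlapAux

noncomputable def F (k : ℕ) (T : ℝ) : ℝ≥0∞ :=
  ∑' n : Fin k → ℕ+, if T ≤ P n then w n else 0

lemma F_le_phi (k s : ℕ) {T : ℝ} (hT : 0 < T) : F k T ≤ Phi k s T := by
  refine ENNReal.tsum_le_tsum fun n => ?_
  by_cases h : T ≤ P n
  · rw [if_pos h, g_eq_one hT (P_pos n) h]
    simp
  · rw [if_neg h]
    exact zero_le

lemma F_le_mass (k : ℕ) (T : ℝ) : F k T ≤ 2 ^ k := by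
  refine le_trans (ENNReal.tsum_le_tsum fun n => ?_) (w_mass k)
  split_ifs <;> simp

lemma F_bound (k : ℕ) (hk : 1 ≤ k) : ∃ C : ℝ, 1 ≤ C ∧ ∀ M B : ℝ, 1 ≤ M → 1 ≤ B →
    F k (M / B) ≤ ENNReal.ofReal
      (C * (min 1 (B / M) * (1 + Real.log (max (M / B) 1)) ^ (k - 1))) := by
  obtain ⟨C0, hC01, hC0⟩ := phi_bound 0 k hk
  have h2k : (0:ℝ) < 2 ^ k := by positivity
  refine ⟨C0 + 2 ^ k, by linarith, fun M B hM hB => ?_⟩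
  have hM0 : (0:ℝ) < M := by linarith
  have hB0 : (0:ℝ) < B := by linarith
  by_cases hBM : B ≤ M
  · have hMB1 : 1 ≤ M / B := (one_le_div hB0).mpr hBM
    have hMB0 : 0 < M / B := by positivity
    refine (F_le_phi k 0 hMB0).trans ((hC0 _ hMB1).trans (ENNReal.ofReal_le_ofReal ?_))
    have e1 : min 1 (B / M) = B / M := min_eq_right ((div_le_one hM0).mpr hBM)
    have e2 : max (M / B) 1 = M / B := max_eq_left hMB1
    rw [e1, e2]
    have e3 : C0 * (1 + Real.log (M / B)) ^ (k - 1) / (M / B)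
        = C0 * (B / M * (1 + Real.log (M / B)) ^ (k - 1)) := by
      rw [div_div_eq_mul_div]
      field_simp
    rw [e3]
    have hpow : (0:ℝ) ≤ B / M * (1 + Real.log (M / B)) ^ (k - 1) := by
      have := Real.log_nonneg hMB1
      positivity
    nlinarith [pow_pos (zero_lt_two (α := ℝ)) k]
  · have hMB : M / B < 1 := (div_lt_one hB0).mpr (lt_of_not_ge hBM)
    have e1 : min 1 (B / M) = 1 := min_eq_left ((one_le_div hM0).mpr (lt_of_not_ge hBM).le)
    have e2 : max (M / B) 1 = 1 := max_eq_right hMB.le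
    rw [e1, e2]
    simp only [Real.log_one, add_zero, one_pow, mul_one]
    refine (F_le_mass k _).trans ?_
    rw [show ((2:ℝ≥0∞)) ^ k = ENNReal.ofReal ((2:ℝ) ^ k) by
      rw [ENNReal.ofReal_pow zero_le_two]; norm_num]
    apply ENNReal.ofReal_le_ofReal
    linarith

noncomputable def S (r j : ℕ) (M : ℝ) : ℝ≥0∞ :=
  ∑' q : (Fin r → ℕ+) × (Fin j → ℕ+) × (Fin r → ℕ+),
    if M ≤ P q.1 * P q.2.1 ∧ M ≤ P q.2.1 * P q.2.2
    then w q.1 * w q.2.1 * w q.2.2 else 0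

lemma S_eq (r j : ℕ) (M : ℝ) : S r j M = ∑' b : Fin j → ℕ+, w b * (F r (M / P b)) ^ 2 := by
  unfold S
  rw [ENNReal.tsum_prod']
  rw [ENNReal.tsum_comm (f := fun (a : Fin r → ℕ+) (bc : (Fin j → ℕ+) × (Fin r → ℕ+)) =>
    if M ≤ P a * P bc.1 ∧ M ≤ P bc.1 * P bc.2 then w a * w bc.1 * w bc.2 else 0)]
  rw [ENNReal.tsum_prod' (f := fun (bc : (Fin j → ℕ+) × (Fin r → ℕ+)) =>
    ∑' a : Fin r → ℕ+, if M ≤ P a * P bc.1 ∧ M ≤ P bc.1 * P bc.2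
      then w a * w bc.1 * w bc.2 else 0)]
  refine tsum_congr fun b => ?_
  have hb := P_pos b
  have hF : (∑' a : Fin r → ℕ+, if M / P b ≤ P a then w a else 0) = F r (M / P b) := rfl
  have e : ∀ (c : Fin r → ℕ+) (a : Fin r → ℕ+),
      (if M ≤ P a * P b ∧ M ≤ P b * P c then w a * w b * w c else 0)
      = (w b * (if M / P b ≤ P c then w c else 0)) * (if M / P b ≤ P a then w a else 0) := by
    intro c a
    by_cases h1 : M / P b ≤ P a <;> by_cases h2 : M / P b ≤ P c
    · rw [if_pos h1, if_pos h2, if_pos ⟨(div_le_iff₀ hb).mp h1, by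
        rw [mul_comm]; exact (div_le_iff₀ hb).mp h2⟩]
      ring
    · rw [if_pos h1, if_neg h2, if_neg fun hcon =>
        h2 ((div_le_iff₀ hb).mpr (by rw [mul_comm]; exact hcon.2))]
      simp
    · rw [if_neg h1, if_pos h2, if_neg fun hcon => h1 ((div_le_iff₀ hb).mpr hcon.1)]
      simp
    · rw [if_neg h1, if_neg h2, if_neg fun hcon => h1 ((div_le_iff₀ hb).mpr hcon.1)]
      simp
  calc ∑' (c : Fin r → ℕ+) (a : Fin r → ℕ+),
        (if M ≤ P a * P b ∧ M ≤ P b * P c then w a * w b * w c else 0)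
      = ∑' (c : Fin r → ℕ+), (w b * (if M / P b ≤ P c then w c else 0)) * F r (M / P b) := by
        refine tsum_congr fun c => ?_
        rw [tsum_congr (e c), ENNReal.tsum_mul_left, hF]
    _ = ∑' (c : Fin r → ℕ+), (w b * F r (M / P b)) * (if M / P b ≤ P c then w c else 0) := by
        refine tsum_congr fun c => ?_
        ring
    _ = (w b * F r (M / P b)) * F r (M / P b) := by rw [ENNReal.tsum_mul_left, hF]
    _ = w b * (F r (M / P b)) ^ 2 := by ring

end OverlapAux
end part5
section part6
namespace OverlapAux

lemma S_bound (r j : ℕ) (hr : 1 ≤ r) (hj : 1 ≤ j) : ∃ C : ℝ, 1 ≤ C ∧ ∀ M : ℝ, 1 ≤ M →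
    S r j M ≤ ENNReal.ofReal (C * (1 + Real.log M) ^ (j - 1) / M) := by
  obtain ⟨Cr, hCr1, hCr⟩ := F_bound r hr
  obtain ⟨Cj, hCj1, hCj⟩ := phi_bound ((r - 1) * 2) j hj
  refine ⟨Cr ^ 2 * Cj, by nlinarith, fun M hM => ?_⟩
  have hM0 : (0:ℝ) < M := by linarith
  rw [S_eq]
  have key : ∀ b : Fin j → ℕ+, w b * (F r (M / P b)) ^ 2 ≤
      ENNReal.ofReal (Cr ^ 2) * (w b * ENNReal.ofReal (g ((r - 1) * 2) M (P b))) := by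
    intro b
    have hmin0 : (0:ℝ) ≤ min 1 (P b / M) :=
      le_min zero_le_one (div_nonneg (P_pos b).le hM0.le)
    have hload : (0:ℝ) ≤ Real.log (max (M / P b) 1) := Real.log_nonneg (le_max_right _ 1)
    have hnn : (0:ℝ) ≤ Cr * (min 1 (P b / M) *
        (1 + Real.log (max (M / P b) 1)) ^ (r - 1)) :=
      mul_nonneg (by linarith) (mul_nonneg hmin0 (pow_nonneg (by linarith) _))
    have h1 := hCr M (P b) hM (one_le_P b)
    have h2 : (F r (M / P b)) ^ 2 ≤ ENNReal.ofReal ((Cr * (min 1 (P b / M) *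
        (1 + Real.log (max (M / P b) 1)) ^ (r - 1))) ^ 2) := by
      rw [ENNReal.ofReal_pow hnn]
      exact pow_le_pow_left' h1 2
    have h3 : (Cr * (min 1 (P b / M) * (1 + Real.log (max (M / P b) 1)) ^ (r - 1))) ^ 2
        = Cr ^ 2 * g ((r - 1) * 2) M (P b) := by
      unfold g
      rw [pow_mul]
      ring
    calc w b * (F r (M / P b)) ^ 2
        ≤ w b * ENNReal.ofReal ((Cr * (min 1 (P b / M) *
            (1 + Real.log (max (M / P b) 1)) ^ (r - 1))) ^ 2) := mul_le_mul' le_rfl h2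
      _ = w b * (ENNReal.ofReal (Cr ^ 2) * ENNReal.ofReal (g ((r - 1) * 2) M (P b))) := by
          rw [h3, ENNReal.ofReal_mul (by positivity)]
      _ = ENNReal.ofReal (Cr ^ 2) * (w b * ENNReal.ofReal (g ((r - 1) * 2) M (P b))) := by
          ring
  calc ∑' b : Fin j → ℕ+, w b * (F r (M / P b)) ^ 2
      ≤ ∑' b : Fin j → ℕ+, ENNReal.ofReal (Cr ^ 2) *
          (w b * ENNReal.ofReal (g ((r - 1) * 2) M (P b))) := ENNReal.tsum_le_tsum key
    _ = ENNReal.ofReal (Cr ^ 2) * Phi j ((r - 1) * 2) M := ENNReal.tsum_mul_left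
    _ ≤ ENNReal.ofReal (Cr ^ 2) * ENNReal.ofReal (Cj * (1 + Real.log M) ^ (j - 1) / M) :=
        mul_le_mul' le_rfl (hCj M hM)
    _ = ENNReal.ofReal (Cr ^ 2 * (Cj * (1 + Real.log M) ^ (j - 1) / M)) :=
        (ENNReal.ofReal_mul (by positivity)).symm
    _ = ENNReal.ofReal (Cr ^ 2 * Cj * (1 + Real.log M) ^ (j - 1) / M) := by
        congr 1
        ring

end OverlapAux
end part6
/-- The series ∑ 1/(a₁²⋯a_r²·b₁²⋯b_j²·c₁²⋯c_r²) over positive integer tuples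
with a₁⋯a_r·b₁⋯b_j ≥ M and b₁⋯b_j·c₁⋯c_r ≥ M. -/
noncomputable def overlapSumRJ (r j : ℕ) (M : ℝ) : ℝ :=
  ∑' p : {p : (Fin r → ℕ) × (Fin j → ℕ) × (Fin r → ℕ) //
      (∀ i, 0 < p.1 i) ∧ (∀ i, 0 < p.2.1 i) ∧ (∀ i, 0 < p.2.2 i) ∧
      M ≤ (((∏ i, p.1 i) * ∏ i, p.2.1 i : ℕ) : ℝ) ∧
      M ≤ (((∏ i, p.2.1 i) * ∏ i, p.2.2 i : ℕ) : ℝ)},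
    (1 : ℝ) /
      ((∏ i, (p.1.1 i : ℝ) ^ 2) * (∏ i, (p.1.2.1 i : ℝ) ^ 2) *
        (∏ i, (p.1.2.2 i : ℝ) ^ 2))

namespace OverlapAux

lemma w_mk {k : ℕ} (d : Fin k → ℕ) (hd : ∀ i, 0 < d i) :
    w (fun i => (⟨d i, hd i⟩ : ℕ+)) = ENNReal.ofReal (1 / ∏ i, (d i : ℝ) ^ 2) := by
  unfold w v
  rw [← ENNReal.ofReal_prod_of_nonneg (fun i _ => by positivity)]
  congr 1
  rw [Finset.prod_div_distrib, Finset.prod_const_one]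
  rfl

lemma overlap_le {r j : ℕ} {M c : ℝ} (hM : 0 < M) (hc : 0 ≤ c)
    (h : S r j M ≤ ENNReal.ofReal c) : overlapSumRJ r j M ≤ c := by
  unfold overlapSumRJ
  set ι := {p : (Fin r → ℕ) × (Fin j → ℕ) × (Fin r → ℕ) //
      (∀ i, 0 < p.1 i) ∧ (∀ i, 0 < p.2.1 i) ∧ (∀ i, 0 < p.2.2 i) ∧
      M ≤ (((∏ i, p.1 i) * ∏ i, p.2.1 i : ℕ) : ℝ) ∧
      M ≤ (((∏ i, p.2.1 i) * ∏ i, p.2.2 i : ℕ) : ℝ)} with hι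
  set f : ι → ℝ := fun p => (1 : ℝ) /
      ((∏ i, (p.1.1 i : ℝ) ^ 2) * (∏ i, (p.1.2.1 i : ℝ) ^ 2) *
        (∏ i, (p.1.2.2 i : ℝ) ^ 2)) with hf
  have hnn : ∀ p : ι, 0 ≤ f p := fun p => by
    rw [hf]
    positivity
  by_cases hsum : Summable f
  · refine (ENNReal.ofReal_le_ofReal_iff hc).mp ?_
    rw [ENNReal.ofReal_tsum_of_nonneg hnn hsum]
    refine le_trans ?_ h
    set φ : ι → (Fin r → ℕ+) × (Fin j → ℕ+) × (Fin r → ℕ+) := fun p =>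
      (fun i => ⟨p.1.1 i, p.2.1 i⟩, fun i => ⟨p.1.2.1 i, p.2.2.1 i⟩,
        fun i => ⟨p.1.2.2 i, p.2.2.2.1 i⟩) with hφ
    have hφinj : Function.Injective φ := by
      intro p q hpq
      refine Subtype.ext ?_
      have e1 := congrArg Prod.fst hpq
      have e2 := congrArg (fun t => t.2.1) hpq
      have e3 := congrArg (fun t => t.2.2) hpq
      refine Prod.ext ?_ (Prod.ext ?_ ?_)
      · funext i; exact congrArg PNat.val (congrFun e1 i)
      · funext i; exact congrArg PNat.val (congrFun e2 i)
      · funext i; exact congrArg PNat.val (congrFun e3 i)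
    have hpt : ∀ p : ι, ENNReal.ofReal (f p) =
        (if M ≤ P (φ p).1 * P (φ p).2.1 ∧ M ≤ P (φ p).2.1 * P (φ p).2.2
          then w (φ p).1 * w (φ p).2.1 * w (φ p).2.2 else 0) := by
      rintro ⟨⟨a, b, c'⟩, h1, h2, h3, h4, h5⟩
      have hPa : P (fun i => (⟨a i, h1 i⟩ : ℕ+)) = ∏ i, (a i : ℝ) := rfl
      have hPb : P (fun i => (⟨b i, h2 i⟩ : ℕ+)) = ∏ i, (b i : ℝ) := rfl
      have hPc : P (fun i => (⟨c' i, h3 i⟩ : ℕ+)) = ∏ i, (c' i : ℝ) := rfl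
      rw [if_pos]
      · show ENNReal.ofReal (f ⟨⟨a, b, c'⟩, h1, h2, h3, h4, h5⟩) = _
        rw [hf]
        simp only [hφ]
        rw [w_mk a h1, w_mk b h2, w_mk c' h3,
          ← ENNReal.ofReal_mul (by positivity), ← ENNReal.ofReal_mul (by positivity)]
        congr 1
        rw [div_mul_div_comm, div_mul_div_comm, one_mul, one_mul]
      · constructor
        · simp only [hφ]
          rw [hPa, hPb]
          push_cast at h4
          exact h4
        · simp only [hφ]
          rw [hPb, hPc]
          push_cast at h5
          exact h5
    calc ∑' p : ι, ENNReal.ofReal (f p)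
        = ∑' p : ι, (if M ≤ P (φ p).1 * P (φ p).2.1 ∧ M ≤ P (φ p).2.1 * P (φ p).2.2
            then w (φ p).1 * w (φ p).2.1 * w (φ p).2.2 else 0) := tsum_congr hpt
      _ ≤ S r j M := ENNReal.tsum_comp_le_tsum_of_injective hφinj _
  · rw [tsum_eq_zero_of_not_summable hsum]
    exact hc

lemma main_pair (r j : ℕ) (hr : 1 ≤ r) (hj : 1 ≤ j) :
    ∃ C : ℝ, 1 ≤ C ∧ ∀ M : ℝ, Real.exp 1 ≤ M →
      overlapSumRJ r j M ≤ C * Real.log M ^ (2 * (j - 1)) / M := by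
  obtain ⟨C, hC1, hC⟩ := S_bound r j hr hj
  have h2p : (1:ℝ) ≤ 2 ^ (j - 1) := one_le_pow₀ one_le_two
  refine ⟨C * 2 ^ (j - 1), by nlinarith, fun M hM => ?_⟩
  have he1 : (1:ℝ) ≤ Real.exp 1 := by nlinarith [Real.add_one_le_exp 1]
  have hM1 : (1:ℝ) ≤ M := he1.trans hM
  have hM0 : (0:ℝ) < M := by linarith
  have hlog1 : (1:ℝ) ≤ Real.log M := by
    rw [show (1:ℝ) = Real.log (Real.exp 1) by rw [Real.log_exp]]
    exact Real.log_le_log (Real.exp_pos 1) hM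
  apply overlap_le hM0 (by positivity)
  refine (hC M hM1).trans (ENNReal.ofReal_le_ofReal ?_)
  have h1 : (1 + Real.log M) ^ (j - 1) ≤ (2 * Real.log M) ^ (j - 1) :=
    pow_le_pow_left₀ (by linarith) (by linarith) _
  have h2 : (2 * Real.log M) ^ (j - 1) = 2 ^ (j - 1) * Real.log M ^ (j - 1) := mul_pow _ _ _
  have h3 : Real.log M ^ (j - 1) ≤ Real.log M ^ (2 * (j - 1)) :=
    pow_le_pow_right₀ hlog1 (by omega)
  apply div_le_div_of_nonneg_left' ?_ hM0
  have h4 : (0:ℝ) ≤ 2 ^ (j - 1) := by positivity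
  have e1 : C * (1 + Real.log M) ^ (j-1) ≤ C * (2 * Real.log M) ^ (j-1) :=
    mul_le_mul_of_nonneg_left h1 (by linarith)
  have e2 : C * (2 * Real.log M) ^ (j-1) = C * 2 ^ (j-1) * Real.log M ^ (j-1) := by
    rw [h2]; ring
  have e3 : C * 2 ^ (j-1) * Real.log M ^ (j-1) ≤ C * 2 ^ (j-1) * Real.log M ^ (2*(j-1)) :=
    mul_le_mul_of_nonneg_left h3 (mul_nonneg (by linarith) h4)
  linarith

end OverlapAux

theorem stmt_9 (ℓ : ℕ) (hℓ : 2 ≤ ℓ) :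
    ∃ C M₀ : ℝ, 0 < C ∧ 1 < M₀ ∧
      ∀ r j : ℕ, 1 ≤ r → 1 ≤ j → r + j = ℓ →
        ∀ M : ℝ, M₀ ≤ M →
          overlapSumRJ r j M ≤ C * (Real.log M) ^ (2 * (j - 1)) / M := by
  have hmain : ∀ p : ℕ × ℕ, ∃ C : ℝ, 1 ≤ C ∧ (1 ≤ p.1 → 1 ≤ p.2 →
      ∀ M : ℝ, Real.exp 1 ≤ M →
        overlapSumRJ p.1 p.2 M ≤ C * Real.log M ^ (2 * (p.2 - 1)) / M) := by
    intro p
    by_cases h1 : 1 ≤ p.1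
    · by_cases h2 : 1 ≤ p.2
      · obtain ⟨C, hC1, hC⟩ := OverlapAux.main_pair p.1 p.2 h1 h2
        exact ⟨C, hC1, fun _ _ => hC⟩
      · exact ⟨1, le_rfl, fun _ h => absurd h h2⟩
    · exact ⟨1, le_rfl, fun h => absurd h h1⟩
  choose Cf hCf1 hCf2 using hmain
  refine ⟨∑ p ∈ (Finset.range (ℓ+1)) ×ˢ (Finset.range (ℓ+1)), Cf p, Real.exp 1, ?_, ?_, ?_⟩
  · refine Finset.sum_pos (fun p _ => lt_of_lt_of_le zero_lt_one (hCf1 p)) ?_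
    exact ⟨(0, 0), by simp⟩
  · nlinarith [Real.add_one_le_exp 1]
  · intro r j hr hj hrj M hM
    have hmem : (r, j) ∈ (Finset.range (ℓ+1)) ×ˢ (Finset.range (ℓ+1)) := by
      simp only [Finset.mem_product, Finset.mem_range]
      omega
    have hle : Cf (r, j) ≤ ∑ p ∈ (Finset.range (ℓ+1)) ×ˢ (Finset.range (ℓ+1)), Cf p :=
      Finset.single_le_sum (fun p _ => zero_le_one.trans (hCf1 p)) hmem
    have h := hCf2 (r, j) hr hj M hM
    refine h.trans ?_
    have hM0 : (0:ℝ) < M := lt_of_lt_of_le (Real.exp_pos 1) hM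
    have hlognn : (0:ℝ) ≤ Real.log M := by
      apply Real.log_nonneg
      nlinarith [Real.add_one_le_exp 1]
    apply OverlapAux.div_le_div_of_nonneg_left' ?_ hM0
    exact mul_le_mul_of_nonneg_right hle (by positivity)
end

section
/- For every integer ℓ ≥ 1 there exist constants c₁, c₂ > 0 and M₀ > 1, depending only on ℓ, such that for all real M ≥ M₀: c₁·(log M)^{ℓ−1}/M ≤ ∑ 1/(a₁²·a₂²⋯a_{ℓ+1}²) ≤ c₂·(log M)^{ℓ−1}/M, where the sum ranges over all (ℓ+1)-tuples (a₁, …, a_{ℓ+1}) of positive integers satisfying a₁·a₂⋯a_ℓ < M and a₂·a₃⋯a_{ℓ+1} ≥ M. -/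
open MeasureTheory Filter Set

/-- The series ∑ 1/(a₁²⋯a_{ℓ+1}²) over (ℓ+1)-tuples of positive integers with
a₁⋯a_ℓ < M and a₂⋯a_{ℓ+1} ≥ M. -/
noncomputable def shiftedSum (ℓ : ℕ) (M : ℝ) : ℝ :=
  ∑' a : {a : Fin (ℓ + 1) → ℕ // (∀ i, 0 < a i) ∧
      ((∏ i : Fin ℓ, a i.castSucc : ℕ) : ℝ) < M ∧
      M ≤ ((∏ i : Fin ℓ, a i.succ : ℕ) : ℝ)},
    (1 : ℝ) / ∏ i, (a.1 i : ℝ) ^ 2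

open scoped ENNReal

lemma aux_ofReal_tsum (p : ℕ) (C : ℕ → Prop) [DecidablePred C] (hC : ∀ n, C n → 0 < n)
    (hs : Summable fun n => if C n then ((n : ℝ) ^ p)⁻¹ else 0) :
    (∑' n : ℕ, if C n then ((n : ℝ≥0∞) ^ p)⁻¹ else 0)
      = ENNReal.ofReal (∑' n : ℕ, if C n then ((n : ℝ) ^ p)⁻¹ else 0) := by
  rw [ENNReal.ofReal_tsum_of_nonneg (fun n => by positivity) hs]
  congr 1; funext n
  by_cases h : C n
  · have hn : (0:ℝ) < (n:ℝ) := by exact_mod_cast hC n h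
    simp only [h, if_true]
    rw [ENNReal.ofReal_inv_of_pos (by positivity), ENNReal.ofReal_pow hn.le,
      ENNReal.ofReal_natCast]
  · simp [h]

lemma summable_tail (x : ℝ) :
    Summable (fun n : ℕ => if x ≤ (n : ℝ) then ((n : ℝ) ^ 2)⁻¹ else 0) := by
  apply Summable.of_nonneg_of_le (fun n => by positivity)
    (fun n => ?_) (Real.summable_nat_pow_inv.mpr one_lt_two)
  by_cases h : x ≤ (n : ℝ) <;> simp [h]

lemma real_tail_le (x : ℝ) (hx : 1 ≤ x) :
    (∑' n : ℕ, if x ≤ (n : ℝ) then ((n : ℝ) ^ 2)⁻¹ else 0) ≤ 2 / x := by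
  set m : ℕ := ⌈x⌉₊ with hm
  have hm1 : 1 ≤ m := Nat.one_le_ceil_iff.mpr (by linarith)
  refine Summable.tsum_le_of_sum_le (summable_tail x) fun s => ?_
  classical
  have hsub : Finset.filter (fun n : ℕ => x ≤ (n : ℝ)) s ⊆ Finset.Ioo (m - 1)
      ((s.sup id) + 1) := by
    intro n hn
    simp only [Finset.mem_filter] at hn
    have h1 : m ≤ n := Nat.ceil_le.mpr hn.2
    have h2 : n ≤ s.sup id := Finset.le_sup (f := id) hn.1
    simp only [Finset.mem_Ioo]
    omega
  calc ∑ n ∈ s, (if x ≤ (n:ℝ) then ((n:ℝ)^2)⁻¹ else 0)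
      = ∑ n ∈ Finset.filter (fun n : ℕ => x ≤ (n:ℝ)) s, ((n:ℝ)^2)⁻¹ := by
        rw [Finset.sum_filter]
    _ ≤ ∑ n ∈ Finset.Ioo (m-1) ((s.sup id)+1), ((n:ℝ)^2)⁻¹ :=
        Finset.sum_le_sum_of_subset_of_nonneg hsub (fun n _ _ => by positivity)
    _ ≤ 2 / ((m-1 : ℕ) + 1) := sum_Ioo_inv_sq_le _ _
    _ ≤ 2 / x := by
        apply div_le_div_of_nonneg_left (by norm_num) (by linarith)
        have : ((m-1:ℕ):ℝ) + 1 = (m:ℝ) := by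
          have : (m - 1) + 1 = m := by omega
          exact_mod_cast congrArg (Nat.cast (R := ℝ)) this
        rw [this]
        exact Nat.le_ceil x


lemma le_real_tail (x : ℝ) (hx : 1 ≤ x) :
    1 / (4 * x) ≤ ∑' n : ℕ, if x ≤ (n : ℝ) then ((n : ℝ) ^ 2)⁻¹ else 0 := by
  set m : ℕ := ⌈x⌉₊ with hm
  have hm1 : 1 ≤ m := Nat.one_le_ceil_iff.mpr (by linarith)
  have hmx : (m : ℝ) ≤ 2 * x := by
    have h := Nat.ceil_lt_add_one (le_trans zero_le_one hx)
    linarith [h]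
  have hmx' : x ≤ (m:ℝ) := Nat.le_ceil x
  -- telescoping lower bound on a finite chunk
  have tele : ∑ i ∈ Finset.range m, (((m + i : ℕ) : ℝ)⁻¹ - ((m + i + 1 : ℕ) : ℝ)⁻¹)
      = ((m:ℝ))⁻¹ - ((m + m : ℕ) : ℝ)⁻¹ := by
    have := Finset.sum_range_sub' (f := fun i : ℕ => ((m + i : ℕ) : ℝ)⁻¹) m
    push_cast at this ⊢
    rw [show ((m:ℝ)+0)⁻¹ = (m:ℝ)⁻¹ by norm_num] at this
    rw [← this]
    apply Finset.sum_congr rfl; intro i _; ring_nf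
  have key : (1:ℝ) / (2 * (m:ℝ)) ≤ ∑ n ∈ Finset.Ico m (m + m), ((n:ℝ)^2)⁻¹ := by
    have h1 : ∑ n ∈ Finset.Ico m (m + m), ((n:ℝ)⁻¹ - ((n+1:ℕ):ℝ)⁻¹)
        ≤ ∑ n ∈ Finset.Ico m (m + m), ((n:ℝ)^2)⁻¹ := by
      apply Finset.sum_le_sum
      intro n hn
      simp only [Finset.mem_Ico] at hn
      have hn1 : 1 ≤ n := le_trans hm1 hn.1
      have hn0 : (0:ℝ) < n := by exact_mod_cast hn1
      have : (n:ℝ)⁻¹ - ((n+1:ℕ):ℝ)⁻¹ = ((n:ℝ) * ((n:ℝ)+1))⁻¹ := by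
        push_cast
        rw [inv_sub_inv (by positivity) (by positivity)]
        ring_nf
      rw [this]
      apply inv_anti₀ (by positivity)
      push_cast
      nlinarith
    have h2 : ∑ n ∈ Finset.Ico m (m + m), ((n:ℝ)⁻¹ - ((n+1:ℕ):ℝ)⁻¹)
        = ((m:ℝ))⁻¹ - ((m + m : ℕ) : ℝ)⁻¹ := by
      rw [Finset.sum_Ico_eq_sum_range]
      simp only [Nat.add_sub_cancel_left]
      rw [← tele]
    have h3 : ((m:ℝ))⁻¹ - ((m + m : ℕ) : ℝ)⁻¹ = 1 / (2 * (m:ℝ)) := by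
      have hm0 : (0:ℝ) < m := by exact_mod_cast hm1
      push_cast
      field_simp
      ring
    linarith
  have hfin : ∑ n ∈ Finset.Ico m (m + m), ((n:ℝ)^2)⁻¹
      = ∑ n ∈ Finset.Ico m (m + m), (if x ≤ (n:ℝ) then ((n:ℝ)^2)⁻¹ else 0) := by
    apply Finset.sum_congr rfl
    intro n hn
    simp only [Finset.mem_Ico] at hn
    have : x ≤ (n:ℝ) := le_trans hmx' (by exact_mod_cast hn.1)
    simp [this]
  calc (1:ℝ)/(4*x) ≤ 1/(2*(m:ℝ)) := by
        apply div_le_div_of_nonneg_left (by norm_num) (by positivity)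
        linarith
    _ ≤ ∑ n ∈ Finset.Ico m (m + m), ((n:ℝ)^2)⁻¹ := key
    _ = _ := hfin
    _ ≤ _ := Summable.sum_le_tsum _ (fun n _ => by positivity) (summable_tail x)

lemma real_har_eq (N : ℕ) :
    (∑' n : ℕ, if 0 < n ∧ n ≤ N then ((n : ℝ))⁻¹ else 0) = (harmonic N : ℝ) := by
  rw [tsum_eq_sum (s := Finset.Icc 1 N) (by
    intro n hn
    simp only [Finset.mem_Icc, not_and, not_le] at hn
    by_cases h1 : 0 < n
    · have := hn h1
      rw [if_neg (by omega)]
    · simp [h1])]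
  rw [harmonic_eq_sum_Icc]
  push_cast
  apply Finset.sum_congr rfl
  intro n hn
  simp only [Finset.mem_Icc] at hn
  simp [hn.1, hn.2, Nat.lt_of_lt_of_le Nat.zero_lt_one hn.1]

lemma summable_harM (M : ℝ) :
    Summable (fun n : ℕ => if 0 < n ∧ (n:ℝ) < M then ((n : ℝ))⁻¹ else 0) := by
  apply summable_of_ne_finset_zero (s := Finset.range (⌈M⌉₊ + 1))
  intro n hn
  simp only [Finset.mem_range, not_lt] at hn
  have : ¬ ((n:ℝ) < M) := by
    push_neg
    calc M ≤ (⌈M⌉₊ : ℝ) := Nat.le_ceil M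
    _ ≤ (n : ℝ) := by exact_mod_cast le_trans (Nat.le_succ _) hn
  simp [this]

lemma summable_harN (N : ℕ) :
    Summable (fun n : ℕ => if 0 < n ∧ n ≤ N then ((n : ℝ))⁻¹ else 0) := by
  apply summable_of_ne_finset_zero (s := Finset.range (N + 1))
  intro n hn
  simp only [Finset.mem_range, not_lt] at hn
  have : ¬ (n ≤ N) := by omega
  simp [this]

lemma real_harM_le (M : ℝ) (hM : 1 ≤ M) :
    (∑' n : ℕ, if 0 < n ∧ (n:ℝ) < M then ((n : ℝ))⁻¹ else 0) ≤ 1 + Real.log M := by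
  set N : ℕ := ⌈M⌉₊ - 1 with hN
  have step : (∑' n : ℕ, if 0 < n ∧ (n:ℝ) < M then ((n : ℝ))⁻¹ else 0)
      ≤ ∑' n : ℕ, if 0 < n ∧ n ≤ N then ((n : ℝ))⁻¹ else 0 := by
    apply Summable.tsum_le_tsum _ (summable_harM M) (summable_harN N)
    intro n
    by_cases h : 0 < n ∧ (n:ℝ) < M
    · have h2 : n ≤ N := by
        have : n < ⌈M⌉₊ := Nat.lt_ceil.mpr h.2
        omega
      simp [h, h.1, h2]
    · simp only [h, if_false]
      positivity
  rw [real_har_eq N] at step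
  refine le_trans step (le_trans (harmonic_le_one_add_log N) ?_)
  have hNM : (N : ℝ) ≤ M := by
    by_cases h0 : N = 0
    · simp [h0]; linarith
    have : (⌈M⌉₊ : ℝ) < M + 1 := Nat.ceil_lt_add_one (by linarith)
    have hge : 1 ≤ ⌈M⌉₊ := Nat.one_le_ceil_iff.mpr (by linarith)
    have : ((N:ℝ)) = (⌈M⌉₊:ℝ) - 1 := by
      rw [hN]; push_cast [hge]; ring
    linarith
  have hlog : Real.log N ≤ Real.log M := by
    rcases Nat.eq_zero_or_pos N with h0 | h0
    · simp [h0]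
      exact Real.log_nonneg hM
    · exact Real.log_le_log (by exact_mod_cast h0) hNM
  linarith

lemma enn_tsum_pi (k : ℕ) (g : ℕ → ℝ≥0∞) :
    ∑' u : Fin k → ℕ, ∏ i, g (u i) = (∑' n, g n) ^ k := by
  induction k with
  | zero =>
      haveI : Unique (Fin 0 → ℕ) := Pi.uniqueOfIsEmpty _
      rw [pow_zero, tsum_eq_single (default : Fin 0 → ℕ)
        (fun b hb => absurd (Subsingleton.elim b default) hb)]
      simp
  | succ k ih =>
      rw [← (Fin.consEquiv (fun _ : Fin (k+1) => ℕ)).tsum_eq, ENNReal.tsum_prod']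
      have : ∀ (n : ℕ) (v : Fin k → ℕ),
          (∏ i, g ((Fin.consEquiv (fun _ : Fin (k+1) => ℕ)) (n, v) i))
            = g n * ∏ i, g (v i) := by
        intro n v
        rw [Fin.prod_univ_succ]
        simp [Fin.consEquiv]
      calc ∑' (n : ℕ) (v : Fin k → ℕ),
            (∏ i, g ((Fin.consEquiv (fun _ : Fin (k+1) => ℕ)) (n, v) i))
          = ∑' (n : ℕ) (v : Fin k → ℕ), g n * ∏ i, g (v i) := by
            congr 1; funext n; congr 1; funext v; exact this n v
        _ = (∑' n, g n) * ∑' v : Fin k → ℕ, ∏ i, g (v i) := by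
            rw [← ENNReal.tsum_mul_right]
            congr 1; funext n
            rw [ENNReal.tsum_mul_left]
        _ = (∑' n, g n) ^ (k+1) := by rw [ih, pow_succ]; ring

def splitEquiv (k : ℕ) : (ℕ × (Fin k → ℕ) × ℕ) ≃ (Fin (k+2) → ℕ) where
  toFun p := Fin.cons p.1 (Fin.snoc p.2.1 p.2.2)
  invFun a := (a 0, fun i => a i.succ.castSucc, a (Fin.last (k+1)))
  left_inv := by
    rintro ⟨b, u, c⟩
    refine Prod.ext ?_ (Prod.ext ?_ ?_)
    · simp
    · funext i
      simp [← Fin.succ_castSucc]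
    · simp [← Fin.succ_last]
  right_inv := by
    intro a
    funext i
    induction i using Fin.cases with
    | zero => simp
    | succ j =>
        simp only [Fin.cons_succ]
        induction j using Fin.lastCases with
        | last => simp [Fin.succ_last]
        | cast m => rw [Fin.snoc_castSucc, Fin.succ_castSucc]

lemma cons_snoc_mid {k : ℕ} (b c : ℕ) (u : Fin k → ℕ) (i : Fin k) :
    (Fin.cons b (Fin.snoc u c) : Fin (k+2) → ℕ) i.succ.castSucc = u i := by
  rw [← Fin.succ_castSucc, Fin.cons_succ, Fin.snoc_castSucc]

lemma cons_snoc_last {k : ℕ} (b c : ℕ) (u : Fin k → ℕ) :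
    (Fin.cons b (Fin.snoc u c) : Fin (k+2) → ℕ) (Fin.last (k+1)) = c := by
  rw [← Fin.succ_last, Fin.cons_succ, Fin.snoc_last]

lemma splitEquiv_apply (k : ℕ) (b c : ℕ) (u : Fin k → ℕ) :
    (splitEquiv k (b, u, c) : Fin (k+2) → ℕ) = Fin.cons b (Fin.snoc u c) := rfl

lemma splitEquiv_prod_castSucc (k : ℕ) (b c : ℕ) (u : Fin k → ℕ) :
    (∏ i : Fin (k+1), (splitEquiv k (b, u, c)) i.castSucc) = b * ∏ i, u i := by
  rw [splitEquiv_apply, Fin.prod_univ_succ, Fin.castSucc_zero, Fin.cons_zero]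
  congr 1
  apply Finset.prod_congr rfl
  intro i _
  exact cons_snoc_mid b c u i

lemma splitEquiv_prod_succ (k : ℕ) (b c : ℕ) (u : Fin k → ℕ) :
    (∏ i : Fin (k+1), (splitEquiv k (b, u, c)) i.succ) = (∏ i, u i) * c := by
  rw [splitEquiv_apply, Fin.prod_univ_castSucc]
  congr 1
  · apply Finset.prod_congr rfl
    intro i _
    rw [Fin.succ_castSucc]
    exact cons_snoc_mid b c u i
  · rw [Fin.succ_last]
    exact cons_snoc_last b c u

lemma splitEquiv_prod_weight (k : ℕ) (b c : ℕ) (u : Fin k → ℕ) (w : ℕ → ℝ≥0∞) :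
    (∏ i : Fin (k+2), w ((splitEquiv k (b, u, c)) i))
      = w b * (∏ i, w (u i)) * w c := by
  rw [splitEquiv_apply, Fin.prod_univ_succ, Fin.cons_zero]
  have : (∏ i : Fin (k+1), w ((Fin.cons b (Fin.snoc u c) : Fin (k+2) → ℕ) i.succ))
      = (∏ i, w (u i)) * w c := by
    rw [Fin.prod_univ_castSucc]
    congr 1
    · apply Finset.prod_congr rfl
      intro i _
      rw [Fin.succ_castSucc, cons_snoc_mid b c u i]
    · rw [Fin.succ_last, cons_snoc_last b c u]
  rw [this, mul_assoc]

lemma splitEquiv_pos (k : ℕ) (b c : ℕ) (u : Fin k → ℕ) :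
    (∀ i, 0 < (splitEquiv k (b, u, c)) i) ↔ (0 < b ∧ (∀ i, 0 < u i) ∧ 0 < c) := by
  simp only [splitEquiv_apply]
  constructor
  · intro h
    refine ⟨?_, fun i => ?_, ?_⟩
    · simpa using h 0
    · have := h (i.castSucc.succ)
      rwa [Fin.cons_succ, Fin.snoc_castSucc] at this
    · have := h ((Fin.last k).succ)
      rwa [Fin.cons_succ, Fin.snoc_last] at this
  · rintro ⟨hb, hu, hc⟩ i
    induction i using Fin.cases with
    | zero => simpa using hb
    | succ j =>
        rw [Fin.cons_succ]
        induction j using Fin.lastCases with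
        | last => rw [Fin.snoc_last]; exact hc
        | cast m => rw [Fin.snoc_castSucc]; exact hu m

lemma enn_tail_le (x : ℝ) (hx : 1 ≤ x) :
    (∑' n : ℕ, if x ≤ (n : ℝ) then ((n : ℝ≥0∞) ^ 2)⁻¹ else 0)
      ≤ ENNReal.ofReal (2 / x) := by
  rw [aux_ofReal_tsum 2 (fun n : ℕ => x ≤ (n : ℝ))
    (fun n h => by exact_mod_cast lt_of_lt_of_le (lt_of_lt_of_le zero_lt_one hx) h)
    (summable_tail x)]
  exact ENNReal.ofReal_le_ofReal (real_tail_le x hx)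

lemma enn_le_tail (x : ℝ) (hx : 1 ≤ x) :
    ENNReal.ofReal (1 / (4 * x))
      ≤ ∑' n : ℕ, if x ≤ (n : ℝ) then ((n : ℝ≥0∞) ^ 2)⁻¹ else 0 := by
  rw [aux_ofReal_tsum 2 (fun n : ℕ => x ≤ (n : ℝ))
    (fun n h => by exact_mod_cast lt_of_lt_of_le (lt_of_lt_of_le zero_lt_one hx) h)
    (summable_tail x)]
  exact ENNReal.ofReal_le_ofReal (le_real_tail x hx)

lemma enn_har_le (M : ℝ) (hM : 1 ≤ M) :
    (∑' n : ℕ, if 0 < n ∧ (n : ℝ) < M then ((n : ℝ≥0∞))⁻¹ else 0)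
      ≤ ENNReal.ofReal (1 + Real.log M) := by
  have h1 : ∀ n : ℕ, (if 0 < n ∧ (n : ℝ) < M then ((n : ℝ≥0∞))⁻¹ else 0)
      = (if 0 < n ∧ (n : ℝ) < M then ((n : ℝ≥0∞) ^ 1)⁻¹ else 0) := by
    intro n; rw [pow_one]
  have h2 : (fun n : ℕ => if 0 < n ∧ (n:ℝ) < M then ((n : ℝ) ^ 1)⁻¹ else 0)
      = (fun n : ℕ => if 0 < n ∧ (n:ℝ) < M then ((n : ℝ))⁻¹ else 0) := by
    funext n; rw [pow_one]
  rw [tsum_congr h1, aux_ofReal_tsum 1 (fun n : ℕ => 0 < n ∧ (n:ℝ) < M)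
    (fun n h => h.1) (by rw [h2]; exact summable_harM M)]
  apply ENNReal.ofReal_le_ofReal
  calc (∑' n : ℕ, if 0 < n ∧ (n:ℝ) < M then ((n : ℝ) ^ 1)⁻¹ else 0)
      = (∑' n : ℕ, if 0 < n ∧ (n:ℝ) < M then ((n : ℝ))⁻¹ else 0) := by rw [h2]
    _ ≤ _ := real_harM_le M hM

lemma enn_le_har (N : ℕ) :
    ENNReal.ofReal (Real.log ((N : ℝ) + 1))
      ≤ ∑' n : ℕ, if 0 < n ∧ n ≤ N then ((n : ℝ≥0∞))⁻¹ else 0 := by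
  have h1 : ∀ n : ℕ, (if 0 < n ∧ n ≤ N then ((n : ℝ≥0∞))⁻¹ else 0)
      = (if 0 < n ∧ n ≤ N then ((n : ℝ≥0∞) ^ 1)⁻¹ else 0) := by
    intro n; rw [pow_one]
  have h2 : (fun n : ℕ => if 0 < n ∧ n ≤ N then ((n : ℝ) ^ 1)⁻¹ else 0)
      = (fun n : ℕ => if 0 < n ∧ n ≤ N then ((n : ℝ))⁻¹ else 0) := by
    funext n; rw [pow_one]
  rw [tsum_congr h1, aux_ofReal_tsum 1 (fun n : ℕ => 0 < n ∧ n ≤ N)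
    (fun n h => h.1) (by rw [h2]; exact summable_harN N)]
  apply ENNReal.ofReal_le_ofReal
  have := log_add_one_le_harmonic N
  calc Real.log ((N:ℝ) + 1) = Real.log ((N+1 : ℕ)) := by push_cast; ring_nf
    _ ≤ (harmonic N : ℝ) := log_add_one_le_harmonic N
    _ = _ := by rw [← real_har_eq N, h2]

noncomputable def W (k : ℕ) (M : ℝ) (b : ℕ) (u : Fin k → ℕ) (c : ℕ) : ℝ≥0∞ :=
  if 0 < b ∧ (∀ i, 0 < u i) ∧ 0 < c ∧ ((b * ∏ i, u i : ℕ) : ℝ) < M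
      ∧ M ≤ (((∏ i, u i) * c : ℕ) : ℝ)
  then ((b : ℝ≥0∞) ^ 2)⁻¹ * (∏ i, ((u i : ℝ≥0∞) ^ 2)⁻¹) * ((c : ℝ≥0∞) ^ 2)⁻¹
  else 0

lemma prod_sq_inv_mul (k : ℕ) (u : Fin k → ℕ) (hu : ∀ i, 0 < u i) :
    (∏ i, ((u i : ℝ≥0∞) ^ 2)⁻¹) * ((∏ i, u i : ℕ) : ℝ≥0∞)
      = ∏ i, ((u i : ℝ≥0∞))⁻¹ := by
  rw [Nat.cast_prod, ← Finset.prod_mul_distrib]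
  apply Finset.prod_congr rfl
  intro i _
  have h0 : ((u i : ℝ≥0∞)) ≠ 0 := by
    simp only [ne_eq, Nat.cast_eq_zero]
    exact (hu i).ne'
  have ht : ((u i : ℝ≥0∞)) ≠ ⊤ := ENNReal.natCast_ne_top _
  rw [pow_two, ENNReal.mul_inv (Or.inl h0) (Or.inr h0), mul_assoc,
    ENNReal.inv_mul_cancel h0 ht, mul_one]

lemma sumc_le (k : ℕ) (M : ℝ) (hM1 : 1 < M) (b : ℕ) (u : Fin k → ℕ) :
    (∑' c : ℕ, W k M b u c)
      ≤ (if 0 < b then ((b : ℝ≥0∞) ^ 2)⁻¹ else 0) *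
        (if (∀ i, 0 < u i) ∧ ((∏ i, u i : ℕ) : ℝ) < M then
          (∏ i, ((u i : ℝ≥0∞) ^ 2)⁻¹) * ENNReal.ofReal (2 * (∏ i, u i : ℕ) / M)
        else 0) := by
  by_cases hb : 0 < b
  · by_cases hu : (∀ i, 0 < u i) ∧ ((∏ i, u i : ℕ) : ℝ) < M
    · have hQ1 : 1 ≤ (∏ i, u i) := Finset.one_le_prod' (fun i _ => hu.1 i)
      have hQR : (1:ℝ) ≤ ((∏ i, u i : ℕ):ℝ) := by exact_mod_cast hQ1
      have hQpos : (0:ℝ) < ((∏ i, u i : ℕ):ℝ) := by linarith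
      have hx : 1 ≤ M / ((∏ i, u i : ℕ):ℝ) := (one_le_div hQpos).mpr (le_of_lt hu.2)
      have hpt : ∀ c : ℕ, W k M b u c ≤
          ((b:ℝ≥0∞)^2)⁻¹ * (∏ i, ((u i : ℝ≥0∞)^2)⁻¹) *
            (if M/((∏ i, u i : ℕ):ℝ) ≤ (c:ℝ) then ((c:ℝ≥0∞)^2)⁻¹ else 0) := by
        intro c
        simp only [W]
        by_cases hc : 0 < b ∧ (∀ i, 0 < u i) ∧ 0 < c ∧ ((b * ∏ i, u i : ℕ) : ℝ) < M
            ∧ M ≤ (((∏ i, u i) * c : ℕ) : ℝ)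
        · rw [if_pos hc]
          have htail : M/((∏ i, u i : ℕ):ℝ) ≤ (c:ℝ) := by
            rw [div_le_iff₀ hQpos]
            calc M ≤ (((∏ i, u i) * c : ℕ) : ℝ) := hc.2.2.2.2
              _ = (c:ℝ) * ((∏ i, u i : ℕ):ℝ) := by push_cast; ring
          rw [if_pos htail]
        · rw [if_neg hc]
          exact zero_le
      calc (∑' c : ℕ, W k M b u c)
          ≤ ∑' c : ℕ, ((b:ℝ≥0∞)^2)⁻¹ * (∏ i, ((u i : ℝ≥0∞)^2)⁻¹) *
            (if M/((∏ i, u i : ℕ):ℝ) ≤ (c:ℝ) then ((c:ℝ≥0∞)^2)⁻¹ else 0) :=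
            ENNReal.tsum_le_tsum hpt
        _ = ((b:ℝ≥0∞)^2)⁻¹ * (∏ i, ((u i : ℝ≥0∞)^2)⁻¹) *
            (∑' c : ℕ, if M/((∏ i, u i : ℕ):ℝ) ≤ (c:ℝ) then ((c:ℝ≥0∞)^2)⁻¹ else 0) :=
            ENNReal.tsum_mul_left
        _ ≤ ((b:ℝ≥0∞)^2)⁻¹ * (∏ i, ((u i : ℝ≥0∞)^2)⁻¹) *
            ENNReal.ofReal (2 / (M/((∏ i, u i : ℕ):ℝ))) :=
            mul_le_mul_right (enn_tail_le _ hx) _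
        _ = _ := by
            rw [if_pos hb, if_pos hu]
            have : 2 / (M/((∏ i, u i : ℕ):ℝ)) = 2 * ((∏ i, u i : ℕ):ℝ) / M := by
              field_simp
            rw [this, mul_assoc]
    · have hz : ∀ c : ℕ, W k M b u c = 0 := by
        intro c
        simp only [W]
        rw [if_neg]
        rintro ⟨h1, h2, h3, h4, h5⟩
        apply hu
        refine ⟨h2, lt_of_le_of_lt ?_ h4⟩
        have hb1 : (1:ℝ) ≤ (b:ℝ) := by exact_mod_cast hb
        have hQ0 : (0:ℝ) ≤ ∏ i, ((u i : ℕ):ℝ) := Finset.prod_nonneg (fun i _ => by positivity)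
        push_cast
        nlinarith
      simp only [hz, tsum_zero]
      exact zero_le
  · have hz : ∀ c : ℕ, W k M b u c = 0 := by
      intro c
      simp only [W]
      rw [if_neg]
      rintro ⟨h1, -⟩
      exact hb h1
    simp only [hz, tsum_zero]
    exact zero_le

lemma enn_upper (k : ℕ) (M : ℝ) (hM1 : 1 < M) (hlog : 1 ≤ Real.log M) :
    (∑' (b : ℕ) (u : Fin k → ℕ) (c : ℕ), W k M b u c)
      ≤ ENNReal.ofReal (4 * 2 ^ k * (Real.log M) ^ k / M) := by
  have hM0 : (0:ℝ) < M := lt_trans zero_lt_one hM1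
  set g1 : ℕ → ℝ≥0∞ := fun n => if 0 < n ∧ (n : ℝ) < M then ((n : ℝ≥0∞))⁻¹ else 0 with hg1
  have step1 : (∑' (b : ℕ) (u : Fin k → ℕ) (c : ℕ), W k M b u c)
      ≤ (∑' b : ℕ, if 0 < b then ((b:ℝ≥0∞)^2)⁻¹ else 0) *
        (∑' u : Fin k → ℕ, if (∀ i, 0 < u i) ∧ ((∏ i, u i : ℕ) : ℝ) < M then
          (∏ i, ((u i : ℝ≥0∞)^2)⁻¹) * ENNReal.ofReal (2 * (∏ i, u i : ℕ) / M)
        else 0) := by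
    rw [← ENNReal.tsum_mul_right]
    apply ENNReal.tsum_le_tsum
    intro b
    calc (∑' (u : Fin k → ℕ) (c : ℕ), W k M b u c)
        ≤ ∑' u : Fin k → ℕ, (if 0 < b then ((b:ℝ≥0∞)^2)⁻¹ else 0) *
          (if (∀ i, 0 < u i) ∧ ((∏ i, u i : ℕ) : ℝ) < M then
            (∏ i, ((u i : ℝ≥0∞)^2)⁻¹) * ENNReal.ofReal (2 * (∏ i, u i : ℕ) / M)
          else 0) := ENNReal.tsum_le_tsum (fun u => sumc_le k M hM1 b u)
      _ = _ := ENNReal.tsum_mul_left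
  have hbsum : (∑' b : ℕ, if 0 < b then ((b:ℝ≥0∞)^2)⁻¹ else 0)
      ≤ ENNReal.ofReal 2 := by
    have hcongr : ∀ b : ℕ, (if 0 < b then ((b:ℝ≥0∞)^2)⁻¹ else 0)
        = (if (1:ℝ) ≤ (b:ℝ) then ((b:ℝ≥0∞)^2)⁻¹ else 0) := by
      intro b
      apply if_congr _ rfl rfl
      constructor
      · intro h; exact_mod_cast h
      · intro h; exact_mod_cast h
    rw [tsum_congr hcongr]
    have := enn_tail_le 1 le_rfl
    simpa using this
  have husum : (∑' u : Fin k → ℕ, if (∀ i, 0 < u i) ∧ ((∏ i, u i : ℕ) : ℝ) < M then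
        (∏ i, ((u i : ℝ≥0∞)^2)⁻¹) * ENNReal.ofReal (2 * (∏ i, u i : ℕ) / M)
      else 0)
      ≤ ENNReal.ofReal (2/M) * ENNReal.ofReal (2 * Real.log M) ^ k := by
    have hpt : ∀ u : Fin k → ℕ,
        (if (∀ i, 0 < u i) ∧ ((∏ i, u i : ℕ) : ℝ) < M then
          (∏ i, ((u i : ℝ≥0∞)^2)⁻¹) * ENNReal.ofReal (2 * (∏ i, u i : ℕ) / M)
        else 0) ≤ ENNReal.ofReal (2/M) * ∏ i, g1 (u i) := by
      intro u
      by_cases hu : (∀ i, 0 < u i) ∧ ((∏ i, u i : ℕ) : ℝ) < M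
      · rw [if_pos hu]
        have heq : ENNReal.ofReal (2 * (∏ i, u i : ℕ) / M)
            = ENNReal.ofReal (2/M) * ((∏ i, u i : ℕ) : ℝ≥0∞) := by
          rw [show (2 * ((∏ i, u i : ℕ):ℝ) / M) = (2/M) * ((∏ i, u i : ℕ):ℝ) by ring,
            ENNReal.ofReal_mul (by positivity), ENNReal.ofReal_natCast]
        rw [heq, ← mul_assoc, mul_comm (∏ i, ((u i : ℝ≥0∞)^2)⁻¹) (ENNReal.ofReal (2/M)),
          mul_assoc, prod_sq_inv_mul k u hu.1]
        apply mul_le_mul_right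
        apply Finset.prod_le_prod' 
        intro i _
        have hui : 0 < u i := hu.1 i
        have huiM : ((u i : ℕ):ℝ) < M := by
          refine lt_of_le_of_lt ?_ hu.2
          exact_mod_cast Finset.single_le_prod' (fun j _ => Nat.one_le_iff_ne_zero.mpr (hu.1 j).ne') (Finset.mem_univ i)
        rw [hg1]
        simp only [hui, huiM, and_self, if_true]
        exact le_refl _
      · rw [if_neg hu]
        exact zero_le
    calc _ ≤ ∑' u : Fin k → ℕ, ENNReal.ofReal (2/M) * ∏ i, g1 (u i) :=
          ENNReal.tsum_le_tsum hpt
      _ = ENNReal.ofReal (2/M) * (∑' n, g1 n) ^ k := by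
          rw [ENNReal.tsum_mul_left, enn_tsum_pi]
      _ ≤ ENNReal.ofReal (2/M) * ENNReal.ofReal (1 + Real.log M) ^ k := by
          apply mul_le_mul_right
          exact pow_le_pow_left' (enn_har_le M (le_of_lt hM1)) k
      _ ≤ _ := by
          apply mul_le_mul_right
          apply pow_le_pow_left'
          exact ENNReal.ofReal_le_ofReal (by linarith)
  calc (∑' (b : ℕ) (u : Fin k → ℕ) (c : ℕ), W k M b u c)
      ≤ _ := step1
    _ ≤ ENNReal.ofReal 2 * (ENNReal.ofReal (2/M) * ENNReal.ofReal (2 * Real.log M) ^ k) :=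
        mul_le_mul' hbsum husum
    _ = ENNReal.ofReal (2 * ((2/M) * (2 * Real.log M) ^ k)) := by
        rw [← ENNReal.ofReal_pow (by positivity), ← ENNReal.ofReal_mul (by positivity),
          ← ENNReal.ofReal_mul (by norm_num)]
    _ = ENNReal.ofReal (4 * 2 ^ k * (Real.log M) ^ k / M) := by
        congr 1
        rw [mul_pow]
        field_simp
        ring




lemma lower_core (k : ℕ) (M : ℝ) (N : ℕ) (hM1 : 1 < M) (hN : 1 ≤ N)
    (hNk : ((N:ℝ))^k < M) :
    ENNReal.ofReal ((1/4) * Real.log ((N:ℝ)+1) ^ k / M)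
      ≤ ∑' (b : ℕ) (u : Fin k → ℕ) (c : ℕ), W k M b u c := by
  classical
  have hM0 : (0:ℝ) < M := lt_trans zero_lt_one hM1
  have hb1 : (∑' (u : Fin k → ℕ) (c : ℕ), W k M 1 u c)
      ≤ ∑' (b : ℕ) (u : Fin k → ℕ) (c : ℕ), W k M b u c := ENNReal.le_tsum 1
  refine le_trans ?_ hb1
  obtain ⟨gN, hgN⟩ : ∃ gN : ℕ → ℝ≥0∞,
      gN = fun n => if 0 < n ∧ n ≤ N then ((n:ℝ≥0∞))⁻¹ else 0 := ⟨_, rfl⟩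
  have hgN' : ∀ n, gN n = if 0 < n ∧ n ≤ N then ((n:ℝ≥0∞))⁻¹ else 0 := by
    intro n; rw [hgN]
  have hpt : ∀ u : Fin k → ℕ,
      ENNReal.ofReal (1/(4*M)) * (∏ i, gN (u i))
        ≤ ∑' c : ℕ, W k M 1 u c := by
    intro u
    by_cases box : ∀ i, 0 < u i ∧ u i ≤ N
    case neg =>
      obtain ⟨i0, hi0⟩ := not_forall.mp box
      have hz : gN (u i0) = 0 := by rw [hgN' (u i0), if_neg hi0]
      rw [Finset.prod_eq_zero (Finset.mem_univ i0) hz, mul_zero]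
      exact zero_le
    case pos =>
      have hupos : ∀ i, 0 < u i := fun i => (box i).1
      have hQ1 : 1 ≤ (∏ i, u i) := Finset.one_le_prod' (fun i _ => hupos i)
      have hQR : (1:ℝ) ≤ ((∏ i, u i : ℕ):ℝ) := by exact_mod_cast hQ1
      have hQpos : (0:ℝ) < ((∏ i, u i : ℕ):ℝ) := by linarith
      have hQM : ((∏ i, u i : ℕ):ℝ) < M := by
        refine lt_of_le_of_lt ?_ hNk
        have h1 : (∏ i, u i) ≤ N ^ k := by
          calc (∏ i, u i) ≤ ∏ _i : Fin k, N :=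
                Finset.prod_le_prod' (fun i _ => (box i).2)
            _ = N ^ k := by rw [Finset.prod_const, Finset.card_univ, Fintype.card_fin]
        exact_mod_cast h1
      have hx : 1 ≤ M / ((∏ i, u i : ℕ):ℝ) := (one_le_div hQpos).mpr (le_of_lt hQM)
      have htail : ∀ c : ℕ,
          (∏ i, ((u i:ℝ≥0∞)^2)⁻¹) *
            (if M/((∏ i, u i : ℕ):ℝ) ≤ (c:ℝ) then ((c:ℝ≥0∞)^2)⁻¹ else 0)
            ≤ W k M 1 u c := by
        intro c
        by_cases hc : M/((∏ i, u i : ℕ):ℝ) ≤ (c:ℝ)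
        · rw [if_pos hc]
          have hc1 : (1:ℝ) ≤ (c:ℝ) := le_trans hx hc
          have hcpos : 0 < c := by exact_mod_cast lt_of_lt_of_le zero_lt_one hc1
          have hcond : 0 < 1 ∧ (∀ i, 0 < u i) ∧ 0 < c ∧ ((1 * ∏ i, u i : ℕ):ℝ) < M
              ∧ M ≤ (((∏ i, u i) * c : ℕ):ℝ) := by
            refine ⟨one_pos, hupos, hcpos, ?_, ?_⟩
            · rw [one_mul]; exact hQM
            · rw [div_le_iff₀ hQpos] at hc
              push_cast at hc ⊢
              linarith [mul_comm (c:ℝ) (∏ i, ((u i : ℕ):ℝ))]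
          simp only [W]
          rw [if_pos hcond]
          apply le_of_eq
          simp
        · rw [if_neg hc, mul_zero]
          exact zero_le
      have heq1 : ENNReal.ofReal (1/(4*M)) *
          (∏ i, gN (u i))
          = (∏ i, ((u i:ℝ≥0∞)^2)⁻¹) *
            ENNReal.ofReal (1/(4*(M/((∏ i, u i : ℕ):ℝ)))) := by
        have e1 : (∏ i, gN (u i))
            = ∏ i, ((u i:ℝ≥0∞))⁻¹ :=
          Finset.prod_congr rfl (fun i _ => by
            rw [hgN' (u i), if_pos ⟨(box i).1, (box i).2⟩])
        have e2 : (1:ℝ)/(4*(M/((∏ i, u i : ℕ):ℝ)))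
            = (1/(4*M)) * ((∏ i, u i : ℕ):ℝ) := by
          field_simp
        rw [e1, e2, ENNReal.ofReal_mul (by positivity), ENNReal.ofReal_natCast,
          ← prod_sq_inv_mul k u hupos, ← mul_assoc,
          mul_comm (ENNReal.ofReal (1/(4*M))) (∏ i, ((u i:ℝ≥0∞)^2)⁻¹), mul_assoc]
      calc ENNReal.ofReal (1/(4*M)) *
            (∏ i, gN (u i))
          = (∏ i, ((u i:ℝ≥0∞)^2)⁻¹) *
            ENNReal.ofReal (1/(4*(M/((∏ i, u i : ℕ):ℝ)))) := heq1
        _ ≤ (∏ i, ((u i:ℝ≥0∞)^2)⁻¹) *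
            ∑' c : ℕ, (if M/((∏ i, u i : ℕ):ℝ) ≤ (c:ℝ) then ((c:ℝ≥0∞)^2)⁻¹ else 0) :=
            mul_le_mul_right (enn_le_tail _ hx) _
        _ = ∑' c : ℕ, (∏ i, ((u i:ℝ≥0∞)^2)⁻¹) *
            (if M/((∏ i, u i : ℕ):ℝ) ≤ (c:ℝ) then ((c:ℝ≥0∞)^2)⁻¹ else 0) :=
            ENNReal.tsum_mul_left.symm
        _ ≤ ∑' c : ℕ, W k M 1 u c := ENNReal.tsum_le_tsum htail
  have hlog0 : 0 ≤ Real.log ((N:ℝ)+1) := Real.log_nonneg (by exact_mod_cast Nat.le_add_left 1 N)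
  have hhar : ENNReal.ofReal (Real.log ((N:ℝ)+1)) ≤ ∑' n : ℕ, gN n := by
    rw [hgN]
    exact enn_le_har N
  calc ENNReal.ofReal ((1/4) * Real.log ((N:ℝ)+1) ^ k / M)
      = ENNReal.ofReal (1/(4*M)) * ENNReal.ofReal (Real.log ((N:ℝ)+1)) ^ k := by
        rw [← ENNReal.ofReal_pow hlog0, ← ENNReal.ofReal_mul (by positivity)]
        congr 1
        field_simp
    _ ≤ ENNReal.ofReal (1/(4*M)) * (∑' n : ℕ, gN n) ^ k :=
        mul_le_mul_right (pow_le_pow_left' hhar k) _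
    _ = ∑' u : Fin k → ℕ, ENNReal.ofReal (1/(4*M)) * (∏ i, gN (u i)) := by
        rw [ENNReal.tsum_mul_left, enn_tsum_pi]
    _ ≤ _ := ENNReal.tsum_le_tsum hpt

lemma T_eq (k : ℕ) (M : ℝ) :
    (∑' a : {a : Fin (k + 1 + 1) → ℕ // (∀ i, 0 < a i) ∧
        ((∏ i : Fin (k+1), a i.castSucc : ℕ) : ℝ) < M ∧
        M ≤ ((∏ i : Fin (k+1), a i.succ : ℕ) : ℝ)},
      ∏ i, ((a.1 i : ℝ≥0∞) ^ 2)⁻¹)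
    = ∑' (b : ℕ) (u : Fin k → ℕ) (c : ℕ), W k M b u c := by
  classical
  have h1 : (∑' (b : ℕ) (u : Fin k → ℕ) (c : ℕ), W k M b u c)
      = ∑' p : ℕ × (Fin k → ℕ) × ℕ, W k M p.1 p.2.1 p.2.2 := by
    rw [ENNReal.tsum_prod']
    apply tsum_congr
    intro b
    rw [ENNReal.tsum_prod']
  have h4 : ∀ p : ℕ × (Fin k → ℕ) × ℕ,
      Set.indicator {a : Fin (k+1+1) → ℕ | (∀ i, 0 < a i) ∧
          ((∏ i : Fin (k+1), a i.castSucc : ℕ) : ℝ) < M ∧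
          M ≤ ((∏ i : Fin (k+1), a i.succ : ℕ) : ℝ)}
        (fun a => ∏ i, ((a i : ℝ≥0∞) ^ 2)⁻¹) (splitEquiv k p)
        = W k M p.1 p.2.1 p.2.2 := by
    rintro ⟨b, u, c⟩
    have hmem : (splitEquiv k (b, u, c) ∈ {a : Fin (k+1+1) → ℕ | (∀ i, 0 < a i) ∧
          ((∏ i : Fin (k+1), a i.castSucc : ℕ) : ℝ) < M ∧
          M ≤ ((∏ i : Fin (k+1), a i.succ : ℕ) : ℝ)}) ↔
        (0 < b ∧ (∀ i, 0 < u i) ∧ 0 < c ∧ ((b * ∏ i, u i : ℕ) : ℝ) < M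
          ∧ M ≤ (((∏ i, u i) * c : ℕ) : ℝ)) := by
      rw [Set.mem_setOf_eq, splitEquiv_pos, splitEquiv_prod_castSucc,
        splitEquiv_prod_succ]
      constructor
      · rintro ⟨⟨p1, p2, p3⟩, q1, q2⟩
        exact ⟨p1, p2, p3, q1, q2⟩
      · rintro ⟨p1, p2, p3, q1, q2⟩
        exact ⟨⟨p1, p2, p3⟩, q1, q2⟩
    rw [Set.indicator_apply]
    by_cases h : (0 < b ∧ (∀ i, 0 < u i) ∧ 0 < c ∧ ((b * ∏ i, u i : ℕ) : ℝ) < M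
        ∧ M ≤ (((∏ i, u i) * c : ℕ) : ℝ))
    · rw [if_pos (hmem.mpr h)]
      simp only [W]
      rw [if_pos h]
      exact splitEquiv_prod_weight k b c u (fun n => ((n : ℝ≥0∞) ^ 2)⁻¹)
    · rw [if_neg (fun hx => h (hmem.mp hx))]
      simp only [W]
      rw [if_neg h]
  calc (∑' a : {a : Fin (k + 1 + 1) → ℕ // (∀ i, 0 < a i) ∧
        ((∏ i : Fin (k+1), a i.castSucc : ℕ) : ℝ) < M ∧
        M ≤ ((∏ i : Fin (k+1), a i.succ : ℕ) : ℝ)},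
      ∏ i, ((a.1 i : ℝ≥0∞) ^ 2)⁻¹)
      = ∑' a : Fin (k+1+1) → ℕ,
          Set.indicator {a : Fin (k+1+1) → ℕ | (∀ i, 0 < a i) ∧
            ((∏ i : Fin (k+1), a i.castSucc : ℕ) : ℝ) < M ∧
            M ≤ ((∏ i : Fin (k+1), a i.succ : ℕ) : ℝ)}
          (fun a => ∏ i, ((a i : ℝ≥0∞) ^ 2)⁻¹) a :=
        tsum_subtype (α := ℝ≥0∞) (β := Fin (k+1+1) → ℕ)
          {a | (∀ i, 0 < a i) ∧
            ((∏ i : Fin (k+1), a i.castSucc : ℕ) : ℝ) < M ∧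
            M ≤ ((∏ i : Fin (k+1), a i.succ : ℕ) : ℝ)}
          (fun a => ∏ i, ((a i : ℝ≥0∞) ^ 2)⁻¹)
    _ = ∑' p : ℕ × (Fin k → ℕ) × ℕ,
          Set.indicator {a : Fin (k+1+1) → ℕ | (∀ i, 0 < a i) ∧
            ((∏ i : Fin (k+1), a i.castSucc : ℕ) : ℝ) < M ∧
            M ≤ ((∏ i : Fin (k+1), a i.succ : ℕ) : ℝ)}
          (fun a => ∏ i, ((a i : ℝ≥0∞) ^ 2)⁻¹) (splitEquiv k p) :=
        ((splitEquiv k).tsum_eq _).symm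
    _ = ∑' p : ℕ × (Fin k → ℕ) × ℕ, W k M p.1 p.2.1 p.2.2 := tsum_congr h4
    _ = _ := h1.symm

theorem stmt_11 (ℓ : ℕ) (hℓ : 1 ≤ ℓ) :
    ∃ c₁ c₂ M₀ : ℝ, 0 < c₁ ∧ 0 < c₂ ∧ 1 < M₀ ∧
      ∀ M : ℝ, M₀ ≤ M →
        c₁ * (Real.log M) ^ (ℓ - 1) / M ≤ shiftedSum ℓ M ∧
        shiftedSum ℓ M ≤ c₂ * (Real.log M) ^ (ℓ - 1) / M := by
  obtain ⟨k, rfl⟩ : ∃ k, ℓ = k + 1 := ⟨ℓ - 1, by omega⟩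
  refine ⟨(1/4) * ((k:ℝ)⁻¹)^k, 4 * 2^k, Real.exp 1, ?_, by positivity, ?_, ?_⟩
  · rcases Nat.eq_zero_or_pos k with h|h
    · subst h; norm_num
    · have h0 : (0:ℝ) < (k:ℝ)⁻¹ := by
        apply inv_pos.mpr
        exact_mod_cast h
      positivity
  · have := Real.add_one_le_exp 1; linarith
  · intro M hM
    have he : (1:ℝ) + 1 ≤ Real.exp 1 := by have := Real.add_one_le_exp 1; linarith
    have hM1 : (1:ℝ) < M := by linarith
    have hM0 : (0:ℝ) < M := by linarith
    have hlog : 1 ≤ Real.log M := by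
      have h2 : Real.log (Real.exp 1) ≤ Real.log M := Real.log_le_log (Real.exp_pos 1) hM
      rwa [Real.log_exp] at h2
    have hfin : ∀ a : {a : Fin (k + 1 + 1) → ℕ // (∀ i, 0 < a i) ∧
        ((∏ i : Fin (k+1), a i.castSucc : ℕ) : ℝ) < M ∧
        M ≤ ((∏ i : Fin (k+1), a i.succ : ℕ) : ℝ)},
        (∏ i, ((a.1 i : ℝ≥0∞) ^ 2)⁻¹) ≠ ⊤ := by
      intro a
      refine (ENNReal.prod_lt_top ?_).ne
      intro i _
      exact ENNReal.inv_ne_top.mpr (pow_ne_zero _ (Nat.cast_ne_zero.mpr (a.2.1 i).ne')) |>.lt_top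
    have key : shiftedSum (k+1) M
        = (∑' (b : ℕ) (u : Fin k → ℕ) (c : ℕ), W k M b u c).toReal := by
      rw [← T_eq k M, ENNReal.tsum_toReal_eq hfin]
      simp only [shiftedSum]
      apply tsum_congr
      intro a
      rw [ENNReal.toReal_prod, one_div, ← Finset.prod_inv_distrib]
      apply Finset.prod_congr rfl
      intro i _
      rw [ENNReal.toReal_inv, ENNReal.toReal_pow, ENNReal.toReal_natCast]
    have hupper := enn_upper k M hM1 hlog
    have hne : (∑' (b : ℕ) (u : Fin k → ℕ) (c : ℕ), W k M b u c) ≠ ⊤ :=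
      (lt_of_le_of_lt hupper ENNReal.ofReal_lt_top).ne
    have hsimp : k + 1 - 1 = k := rfl
    constructor
    · have hlow : ENNReal.ofReal ((1/4) * ((k:ℝ)⁻¹)^k * (Real.log M)^k / M)
          ≤ ∑' (b : ℕ) (u : Fin k → ℕ) (c : ℕ), W k M b u c := by
        rcases Nat.eq_zero_or_pos k with hk0|hk0
        · subst hk0
          have hl := lower_core 0 M 1 hM1 le_rfl (by norm_num; exact hM1)
          refine le_trans (le_of_eq ?_) hl
          norm_num
        · set x : ℝ := M ^ ((k:ℝ)⁻¹) with hx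
          have hkR : (0:ℝ) < k := by exact_mod_cast hk0
          have hx1 : 1 < x := by
            rw [hx]
            exact (Real.one_lt_rpow_iff_of_pos hM0).mpr (Or.inl ⟨hM1, by positivity⟩)
          have hx0 : (0:ℝ) ≤ x := le_of_lt (lt_trans zero_lt_one hx1)
          have hceil : 1 < ⌈x⌉₊ := by
            rw [Nat.lt_ceil]
            exact_mod_cast hx1
          set N : ℕ := ⌈x⌉₊ - 1 with hN
          have hN1 : 1 ≤ N := by omega
          have hNr : ((N:ℝ)) = (⌈x⌉₊:ℝ) - 1 := by
            rw [hN, Nat.cast_sub (by omega)]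
            norm_num
          have hNx : (N:ℝ) < x := by
            have := Nat.ceil_lt_add_one hx0
            rw [hNr]
            linarith
          have hNk : ((N:ℝ))^k < M := by
            have hlt : ((N:ℝ))^k < x^k :=
              pow_lt_pow_left₀ hNx (by positivity) (Nat.pos_iff_ne_zero.mp hk0)
            have hxk : x^k = M := by
              rw [hx, ← Real.rpow_natCast (M ^ ((k:ℝ)⁻¹)) k,
                ← Real.rpow_mul (le_of_lt hM0), inv_mul_cancel₀ (ne_of_gt hkR),
                Real.rpow_one]
            linarith
          have hlogN : (k:ℝ)⁻¹ * Real.log M ≤ Real.log ((N:ℝ)+1) := by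
            have hge : x ≤ (N:ℝ)+1 := by
              rw [hNr]
              have := Nat.le_ceil x
              linarith
            have hll : Real.log x ≤ Real.log ((N:ℝ)+1) :=
              Real.log_le_log (lt_trans zero_lt_one hx1) hge
            rwa [hx, Real.log_rpow hM0] at hll
          refine le_trans ?_ (lower_core k M N hM1 hN1 hNk)
          apply ENNReal.ofReal_le_ofReal
          have hlM : 0 ≤ (k:ℝ)⁻¹ * Real.log M := by positivity
          calc (1/4) * ((k:ℝ)⁻¹)^k * (Real.log M)^k / M
              = (1/4) * ((k:ℝ)⁻¹ * Real.log M)^k / M := by rw [mul_pow]; ring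
            _ ≤ (1/4) * Real.log ((N:ℝ)+1)^k / M := by
                gcongr
      rw [key]
      have := (ENNReal.ofReal_le_iff_le_toReal hne).mp hlow
      calc (1/4) * ((k:ℝ)⁻¹)^k * (Real.log M)^(k+1-1) / M
          = (1/4) * ((k:ℝ)⁻¹)^k * (Real.log M)^k / M := by rw [hsimp]
        _ ≤ _ := this
    · rw [key]
      refine le_trans (ENNReal.toReal_le_of_le_ofReal (by positivity) hupper) ?_
      rw [hsimp]
end
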